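/- arXiv:1309.5759 — 5 statements merged into one kernel-verified Lean document; each statement's English description precedes it below -/
import Mathlib

section
/- Let u, v, a, b be four distinct points of the Euclidean plane ℝ², let r > 0, and suppose ‖u − v‖ ≤ r and ‖a − b‖ ≤ r. If the closed line segments [u, v] and [a, b] have a common point, then at least one of the distances ‖u − a‖, ‖u − b‖, ‖v − a‖, ‖v − b‖ is at most r. (Equivalently: in a geometric graph with parameter r, if two edges not sharing endpoints cross as segments, then at least one of the four edges joining an endpoint of one to an endpoint of the other is also present.) -/
/-- Let `u, v, a, b` be four distinct points of the Euclidean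
plane, `r > 0`, with `‖u − v‖ ≤ r` and `‖a − b‖ ≤ r`.  If the closed segments
`[u, v]` and `[a, b]` have a common point, then one of the distances
`‖u − a‖, ‖u − b‖, ‖v − a‖, ‖v − b‖` is at most `r`. -/
theorem crossing_edges_geometric_graph
    (u v a b : EuclideanSpace ℝ (Fin 2)) (r : ℝ) (hr : 0 < r)
    (huv : u ≠ v) (hab : a ≠ b) (hua : u ≠ a) (hub : u ≠ b) (hva : v ≠ a) (hvb : v ≠ b)
    (huvr : dist u v ≤ r) (habr : dist a b ≤ r)
    (hcross : (segment ℝ u v ∩ segment ℝ a b).Nonempty) :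
    dist u a ≤ r ∨ dist u b ≤ r ∨ dist v a ≤ r ∨ dist v b ≤ r := by
  obtain ⟨p, hp1, hp2⟩ := hcross
  have h1 : dist u p + dist p v = dist u v := dist_add_dist_of_mem_segment hp1
  have h2 : dist a p + dist p b = dist a b := dist_add_dist_of_mem_segment hp2
  have hu : dist u p ≤ r / 2 ∨ dist p v ≤ r / 2 := by
    by_contra h; push_neg at h; linarith
  have ha : dist a p ≤ r / 2 ∨ dist p b ≤ r / 2 := by
    by_contra h; push_neg at h; linarith
  rcases hu with hu | hu <;> rcases ha with ha | ha
  · exact Or.inl (by calc dist u a ≤ dist u p + dist p a := dist_triangle _ _ _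
      _ ≤ r := by rw [dist_comm p a]; linarith)
  · exact Or.inr (Or.inl (by calc dist u b ≤ dist u p + dist p b := dist_triangle _ _ _
      _ ≤ r := by linarith))
  · exact Or.inr (Or.inr (Or.inl (by calc dist v a ≤ dist v p + dist p a := dist_triangle _ _ _
      _ ≤ r := by rw [dist_comm v p, dist_comm p a]; linarith)))
  · exact Or.inr (Or.inr (Or.inr (by calc dist v b ≤ dist v p + dist p b := dist_triangle _ _ _
      _ ≤ r := by rw [dist_comm v p]; linarith)))
end

section
/- Let r > 0 and let x, y ∈ ℝ² with d := ‖x − y‖ ≤ 2r. Then d r ≤ area(B(x; r) \ B(y; r)) ≤ 4 d r. -/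
open Metric Real MeasureTheory Set

private lemma crescent_area_aux (r d : ℝ) (hr : 0 < r) (hd0 : 0 < d) (hdr : d ≤ 2 * r) :
    ENNReal.ofReal (d * r) ≤
        volume {q : ℝ × ℝ | (q.2 - d) ^ 2 + q.1 ^ 2 ≤ r ^ 2 ∧ r ^ 2 < q.2 ^ 2 + q.1 ^ 2} ∧
      volume {q : ℝ × ℝ | (q.2 - d) ^ 2 + q.1 ^ 2 ≤ r ^ 2 ∧ r ^ 2 < q.2 ^ 2 + q.1 ^ 2} ≤
        ENNReal.ofReal (4 * d * r) := by
  set C : Set (ℝ × ℝ) :=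
    {q | (q.2 - d) ^ 2 + q.1 ^ 2 ≤ r ^ 2 ∧ r ^ 2 < q.2 ^ 2 + q.1 ^ 2} with hC
  set f : ℝ → ℝ := fun s => Real.sqrt (r ^ 2 - s ^ 2) with hf
  have hfc : Continuous f := Real.continuous_sqrt.comp (by continuity)
  have hfnn : ∀ s, 0 ≤ f s := fun s => Real.sqrt_nonneg _
  have hfsq : ∀ s, s ^ 2 ≤ r ^ 2 → f s ^ 2 = r ^ 2 - s ^ 2 := fun s hs =>
    Real.sq_sqrt (by linarith)
  constructor
  · -- lower bound
    set c := r / Real.sqrt 2 with hc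
    have hs2 : Real.sqrt 2 ^ 2 = 2 := Real.sq_sqrt (by norm_num)
    have hs2p : (0:ℝ) < Real.sqrt 2 := Real.sqrt_pos.mpr (by norm_num)
    have hcpos : 0 < c := div_pos hr hs2p
    have hcsq : c ^ 2 = r ^ 2 / 2 := by rw [hc, div_pow, hs2]
    set F := fun s => max (f s) (d - f s) with hF
    set G := fun s => d + f s with hG
    have hFc : Continuous F := hfc.max (continuous_const.sub hfc)
    have hGc : Continuous G := continuous_const.add hfc
    have hfge : ∀ s ∈ Icc (-c) c, c ≤ f s := by
      intro s hs
      have hsc : s ^ 2 ≤ c ^ 2 := sq_le_sq' hs.1 hs.2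
      have h1 : c ^ 2 ≤ r ^ 2 - s ^ 2 := by nlinarith
      calc c = Real.sqrt (c ^ 2) := (Real.sqrt_sq hcpos.le).symm
        _ ≤ f s := Real.sqrt_le_sqrt h1
    have hsub : regionBetween F G (Icc (-c) c) ⊆ C := by
      rintro ⟨s, t⟩ ⟨hs, ht1, ht2⟩
      have hw : c ≤ f s := hfge s hs
      have hsc : s ^ 2 ≤ c ^ 2 := sq_le_sq' hs.1 hs.2
      have hwsq : f s ^ 2 = r ^ 2 - s ^ 2 := hfsq s (by nlinarith)
      have hFle : d - f s ≤ F s := le_max_right _ _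
      have hFle2 : f s ≤ F s := le_max_left _ _
      have ht2' : t < d + f s := ht2
      have ht1' : F s < t := ht1
      constructor
      · nlinarith [ht1', ht2', hFle, hwsq]
      · nlinarith [ht1', hFle2, hw, hcpos, hwsq]
    have hFG : ∀ s ∈ Icc (-c) c, F s ≤ G s := by
      intro s hs
      apply max_le
      · show f s ≤ d + f s; linarith
      · show d - f s ≤ d + f s; linarith [hfnn s]
    have hvol : volume (regionBetween F G (Icc (-c) c)) =
        ENNReal.ofReal (∫ s in Icc (-c) c, (G - F) s) := by
      rw [MeasureTheory.Measure.volume_eq_prod]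
      exact volume_regionBetween_eq_integral hFc.integrableOn_Icc hGc.integrableOn_Icc
        measurableSet_Icc hFG
    have hmono : ∫ s in Icc (-c) c, min d (2 * c) ≤ ∫ s in Icc (-c) c, (G - F) s := by
      apply setIntegral_mono_on
      · exact integrableOn_const measure_Icc_lt_top.ne
      · exact (hGc.sub hFc).integrableOn_Icc
      · exact measurableSet_Icc
      · intro s hs
        have hw := hfge s hs
        have : (G - F) s = d + f s - max (f s) (d - f s) := rfl
        rw [this]
        rcases max_cases (f s) (d - f s) with ⟨h1, h2⟩ | ⟨h1, h2⟩
        · rw [h1]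
          have := min_le_left d (2 * c)
          linarith
        · rw [h1]
          have := min_le_right d (2 * c)
          linarith
    have hconst : ∫ s in Icc (-c) c, min d (2 * c) = (2 * c) * min d (2 * c) := by
      rw [MeasureTheory.setIntegral_const, Real.volume_real_Icc_of_le (by linarith),
        smul_eq_mul]
      ring
    have h2c : r ≤ 2 * c := by nlinarith
    have hfinal : d * r ≤ (2 * c) * min d (2 * c) := by
      rcases le_total d (2 * c) with h | h
      · rw [min_eq_left h]; nlinarith
      · rw [min_eq_right h]; nlinarith
    calc ENNReal.ofReal (d * r)
        ≤ ENNReal.ofReal (∫ s in Icc (-c) c, (G - F) s) := by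
          apply ENNReal.ofReal_le_ofReal
          rw [hconst] at hmono
          linarith
      _ = volume (regionBetween F G (Icc (-c) c)) := hvol.symm
      _ ≤ volume C := measure_mono hsub
  · -- upper bound
    have hsub : C ⊆ regionBetween f (fun s => f s + 2 * d) (Icc (-r) r) := by
      rintro ⟨s, t⟩ ⟨h1, h2⟩
      have hs2' : s ^ 2 ≤ r ^ 2 := by nlinarith [sq_nonneg (t - d)]
      have hw : f s ^ 2 = r ^ 2 - s ^ 2 := hfsq s hs2'
      have hsIcc : s ∈ Icc (-r) r := by
        constructor <;> nlinarith
      have habs : |t - d| ≤ f s :=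
        le_of_pow_le_pow_left₀ two_ne_zero (hfnn s) (by rw [sq_abs]; nlinarith)
      obtain ⟨habs1, habs2⟩ := abs_le.mp habs
      have habs3 : f s < |t| :=
        lt_of_pow_lt_pow_left₀ 2 (abs_nonneg t) (by rw [sq_abs]; nlinarith)
      refine ⟨hsIcc, ?_, ?_⟩
      · rcases lt_abs.mp habs3 with h | h
        · exact h
        · exfalso; linarith [hfnn s]
      · show t < f s + 2 * d
        linarith
    calc volume C
        ≤ volume (regionBetween f (fun s => f s + 2 * d) (Icc (-r) r)) := measure_mono hsub
      _ = ENNReal.ofReal (∫ s in Icc (-r) r, ((fun s => f s + 2 * d) - f) s) := by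
          rw [MeasureTheory.Measure.volume_eq_prod]
          exact volume_regionBetween_eq_integral hfc.integrableOn_Icc
            (hfc.add continuous_const).integrableOn_Icc measurableSet_Icc
            (fun s _ => by simp; linarith)
      _ = ENNReal.ofReal (4 * d * r) := by
          have hgf : ((fun s => f s + 2 * d) - f) = fun _ => 2 * d := by
            funext s; simp
          rw [hgf, MeasureTheory.setIntegral_const, Real.volume_real_Icc_of_le (by linarith),
            smul_eq_mul]
          congr 1
          ring

/-- For `x, y ∈ ℝ²` with `d := ‖x − y‖ ≤ 2r` one has
`d r ≤ area(B(x;r) \ B(y;r)) ≤ 4 d r`. -/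
theorem area_ball_diff_ball_bounds
    (r : ℝ) (hr : 0 < r) (x y : EuclideanSpace ℝ (Fin 2))
    (hd : dist x y ≤ 2 * r) :
    ENNReal.ofReal (dist x y * r) ≤ volume (closedBall x r \ closedBall y r) ∧
      volume (closedBall x r \ closedBall y r) ≤ ENNReal.ofReal (4 * dist x y * r) := by
  by_cases h0 : dist x y = 0
  · have hxy : x = y := by rwa [dist_eq_zero] at h0
    subst hxy
    simp [h0, Set.diff_self]
  have hd0 : 0 < dist x y := lt_of_le_of_ne dist_nonneg (Ne.symm h0)
  set d := dist x y with hdd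
  have hdr : d ≤ 2 * r := hd
  set u : EuclideanSpace ℝ (Fin 2) := d⁻¹ • (x - y) with hu
  have hxysub : ‖x - y‖ = d := by rw [hdd, dist_eq_norm]
  have hunorm : ‖u‖ = 1 := by
    rw [hu, norm_smul, hxysub, norm_inv, Real.norm_eq_abs, abs_of_pos hd0,
      inv_mul_cancel₀ hd0.ne']
  have hdu : d • u = x - y := by rw [hu, smul_smul, mul_inv_cancel₀ hd0.ne', one_smul]
  -- extend u to an orthonormal basis
  have hcard : Module.finrank ℝ (EuclideanSpace ℝ (Fin 2)) = Fintype.card (Fin 2) := by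
    simp [finrank_euclideanSpace_fin]
  have horth : Orthonormal ℝ (({0} : Set (Fin 2)).restrict ![u, 0]) := by
    refine ⟨?_, ?_⟩
    · rintro ⟨i, hi⟩
      simp only [Set.mem_singleton_iff] at hi
      subst hi
      exact hunorm
    · rintro ⟨i, hi⟩ ⟨j, hj⟩ hne
      exfalso
      apply hne
      simp only [Set.mem_singleton_iff] at hi hj
      exact Subtype.ext (hi.trans hj.symm)
  obtain ⟨b, hb⟩ := horth.exists_orthonormalBasis_extension_of_card_eq hcard
  have hb0 : b 0 = u := by simpa using hb 0 rfl
  -- coordinates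
  have hT0 : b.repr (x - y) 0 = d := by
    rw [← hdu, _root_.map_smul]
    simp [← hb0, b.repr_self, EuclideanSpace.single_apply]
  have hT1 : b.repr (x - y) 1 = 0 := by
    rw [← hdu, _root_.map_smul]
    simp [← hb0, b.repr_self, EuclideanSpace.single_apply]
  have hnorm : ∀ w : EuclideanSpace ℝ (Fin 2),
      ‖w‖ ^ 2 = (b.repr w 0) ^ 2 + (b.repr w 1) ^ 2 := by
    intro w
    rw [← b.repr.norm_map w, EuclideanSpace.norm_eq, Real.sq_sqrt (by positivity)]
    simp [Fin.sum_univ_two, Real.norm_eq_abs, sq_abs]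
  set Φ : EuclideanSpace ℝ (Fin 2) → ℝ × ℝ :=
    fun p => (b.repr (p - y) 1, b.repr (p - y) 0) with hΦdef
  have hswap : MeasurePreserving (Prod.swap : ℝ × ℝ → ℝ × ℝ) volume volume := by
    rw [MeasureTheory.Measure.volume_eq_prod]
    exact Measure.measurePreserving_swap
  have hΦ : MeasurePreserving Φ volume volume := by
    have h1 : MeasurePreserving (fun p : EuclideanSpace ℝ (Fin 2) => p - y) volume volume :=
      measurePreserving_sub_right volume y
    have h2 := b.measurePreserving_repr
    have h3 := EuclideanSpace.volume_preserving_symm_measurableEquiv_toLp (Fin 2)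
    have h4 := volume_preserving_finTwoArrow ℝ
    have H := (hswap.comp (h4.comp (h3.comp (h2.comp h1))))
    have heq : (Prod.swap ∘ ⇑(MeasurableEquiv.finTwoArrow) ∘
        ⇑(MeasurableEquiv.toLp 2 (Fin 2 → ℝ)).symm ∘ ⇑b.repr ∘
        fun p : EuclideanSpace ℝ (Fin 2) => p - y) = Φ := by
      funext p
      simp [hΦdef, MeasurableEquiv.finTwoArrow, MeasurableEquiv.toLp_symm_apply, Prod.swap]
    rwa [heq] at H
  set C : Set (ℝ × ℝ) :=
    {q | (q.2 - d) ^ 2 + q.1 ^ 2 ≤ r ^ 2 ∧ r ^ 2 < q.2 ^ 2 + q.1 ^ 2} with hC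
  have hCmeas : MeasurableSet C := by
    have hCeq : C = {q : ℝ × ℝ | (q.2 - d) ^ 2 + q.1 ^ 2 ≤ r ^ 2} ∩
        {q : ℝ × ℝ | r ^ 2 < q.2 ^ 2 + q.1 ^ 2} := rfl
    rw [hCeq]
    exact (measurableSet_le (by fun_prop) (by fun_prop)).inter
      (measurableSet_lt (by fun_prop) (by fun_prop))
  have hkey : closedBall x r \ closedBall y r = Φ ⁻¹' C := by
    ext p
    have hsub' : p - x = (p - y) - (x - y) := by abel
    have e0 : b.repr (p - x) 0 = b.repr (p - y) 0 - d := by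
      rw [hsub', map_sub, PiLp.sub_apply, hT0]
    have e1 : b.repr (p - x) 1 = b.repr (p - y) 1 := by
      rw [hsub', map_sub, PiLp.sub_apply, hT1, sub_zero]
    have hpx : dist p x ^ 2 = (b.repr (p - y) 0 - d) ^ 2 + (b.repr (p - y) 1) ^ 2 := by
      rw [dist_eq_norm, hnorm (p - x), e0, e1]
    have hpy : dist p y ^ 2 = (b.repr (p - y) 0) ^ 2 + (b.repr (p - y) 1) ^ 2 := by
      rw [dist_eq_norm, hnorm]
    simp only [Set.mem_diff, Metric.mem_closedBall, Set.mem_preimage, hC, Set.mem_setOf_eq,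
      not_le, hΦdef]
    constructor
    · rintro ⟨h1, h2⟩
      constructor
      · rw [← hpx]
        exact pow_le_pow_left₀ dist_nonneg h1 2
      · rw [← hpy]
        exact pow_lt_pow_left₀ h2 hr.le two_ne_zero
    · rintro ⟨h1, h2⟩
      constructor
      · exact le_of_pow_le_pow_left₀ two_ne_zero hr.le (by rw [hpx]; exact h1)
      · by_contra hcon
        push_neg at hcon
        have h3 : dist p y ^ 2 ≤ r ^ 2 := pow_le_pow_left₀ dist_nonneg hcon 2
        rw [hpy] at h3
        linarith
  rw [hkey, hΦ.measure_preimage hCmeas.nullMeasurableSet]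
  exact crescent_area_aux r d hr hd0 hdr
end

section
/- Suppose 0 < r < 1/2 and x = (h, x₂) ∈ ℝ² with 0 ≤ h < r and r < x₂ < 1 − r. Then (π/2) r² + h r ≤ area(B(x; r) ∩ [0,1]²) ≤ (π/2) r² + 2 h r. -/
open Metric Real MeasureTheory

/-- The unit square `[0,1]²` in the Euclidean plane. -/
def unitSquare : Set (EuclideanSpace ℝ (Fin 2)) :=
  {p | p 0 ∈ Set.Icc (0 : ℝ) 1 ∧ p 1 ∈ Set.Icc (0 : ℝ) 1}

section Aux

variable (h c r : ℝ)

/-- The closed disk of radius `r` centred at `(h, c)` in `ℝ × ℝ`. -/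
def myDisk : Set (ℝ × ℝ) := {q | (q.1 - h) ^ 2 + (q.2 - c) ^ 2 ≤ r ^ 2}

lemma myDisk_measurable : MeasurableSet (myDisk h c r) :=
  measurableSet_le (by fun_prop) measurable_const

lemma volume_myDisk_left (hr0 : 0 < r) (hhr : h < r) (hh0 : 0 ≤ h) :
    volume (myDisk h c r ∩ {q | 0 ≤ q.1 ∧ q.1 < h})
      = ∫⁻ a in Set.Ico (0 : ℝ) h, ENNReal.ofReal (2 * Real.sqrt (r ^ 2 - (a - h) ^ 2)) := by
  set S := myDisk h c r ∩ {q | 0 ≤ q.1 ∧ q.1 < h} with hS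
  have hmeas : MeasurableSet S := by
    apply (myDisk_measurable h c r).inter
    exact (measurableSet_le measurable_const measurable_fst).inter
      (measurableSet_lt measurable_fst measurable_const)
  have key : ∀ a : ℝ, volume (Prod.mk a ⁻¹' S)
      = (Set.Ico (0 : ℝ) h).indicator
          (fun a => ENNReal.ofReal (2 * Real.sqrt (r ^ 2 - (a - h) ^ 2))) a := by
    intro a
    by_cases ha : a ∈ Set.Ico (0 : ℝ) h
    · have hs0 : 0 ≤ r ^ 2 - (a - h) ^ 2 := by nlinarith [ha.1, ha.2]
      have hsl : Prod.mk a ⁻¹' S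
          = Set.Icc (c - Real.sqrt (r ^ 2 - (a - h) ^ 2))
              (c + Real.sqrt (r ^ 2 - (a - h) ^ 2)) := by
        ext b
        simp only [hS, myDisk, Set.mem_preimage, Set.mem_inter_iff, Set.mem_setOf_eq,
          Set.mem_Icc]
        constructor
        · rintro ⟨h1, -⟩
          have habs : |b - c| ≤ Real.sqrt (r ^ 2 - (a - h) ^ 2) := by
            rw [← Real.sqrt_sq_eq_abs]
            exact Real.sqrt_le_sqrt (by linarith)
          rw [abs_le] at habs
          constructor <;> linarith [habs.1, habs.2]
        · rintro ⟨h1, h2⟩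
          have habs : |b - c| ≤ Real.sqrt (r ^ 2 - (a - h) ^ 2) :=
            abs_le.mpr ⟨by linarith, by linarith⟩
          have hb : (b - c) ^ 2 ≤ r ^ 2 - (a - h) ^ 2 := by
            calc (b - c) ^ 2 = |b - c| ^ 2 := (sq_abs _).symm
              _ ≤ Real.sqrt (r ^ 2 - (a - h) ^ 2) ^ 2 :=
                  pow_le_pow_left₀ (abs_nonneg _) habs 2
              _ = r ^ 2 - (a - h) ^ 2 := Real.sq_sqrt hs0
          exact ⟨by linarith, ha.1, ha.2⟩
      rw [hsl, Set.indicator_of_mem ha, Real.volume_Icc]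
      congr 1; ring
    · rw [Set.indicator_of_notMem ha]
      have hempty : Prod.mk a ⁻¹' S = ∅ := by
        rw [Set.eq_empty_iff_forall_notMem]
        intro b hb
        obtain ⟨-, h2, h3⟩ := hb
        exact ha ⟨h2, h3⟩
      rw [hempty, measure_empty]
  rw [Measure.volume_eq_prod, Measure.prod_apply hmeas]
  rw [lintegral_congr key, lintegral_indicator measurableSet_Ico]

lemma volume_myDisk_right (hr0 : 0 < r) (hhr : h < r) (hh0 : 0 ≤ h)
    (hD : volume (myDisk h c r) = ENNReal.ofReal (π * r ^ 2)) :
    volume (myDisk h c r ∩ {q | h ≤ q.1}) = ENNReal.ofReal (π / 2 * r ^ 2) := by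
  have hRm : MeasurableSet (myDisk h c r ∩ {q : ℝ × ℝ | h ≤ q.1}) :=
    (myDisk_measurable h c r).inter (measurableSet_le measurable_const measurable_fst)
  have hσ : MeasurePreserving (fun q : ℝ × ℝ => (2 * h - q.1, q.2)) volume volume := by
    have h1 : MeasurePreserving (fun a : ℝ => 2 * h - a) volume volume := by
      have := (measurePreserving_add_left (volume : Measure ℝ) (2 * h)).comp
        (Measure.measurePreserving_neg (volume : Measure ℝ))
      simpa [Function.comp_def, sub_eq_add_neg] using this
    rw [Measure.volume_eq_prod]
    exact h1.prod (MeasurePreserving.id volume)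
  have hpre : (fun q : ℝ × ℝ => (2 * h - q.1, q.2)) ⁻¹' (myDisk h c r ∩ {q | h ≤ q.1})
      = myDisk h c r ∩ {q : ℝ × ℝ | q.1 ≤ h} := by
    ext q
    simp only [myDisk, Set.mem_preimage, Set.mem_inter_iff, Set.mem_setOf_eq]
    constructor
    · rintro ⟨h1, h2⟩
      exact ⟨by nlinarith, by linarith⟩
    · rintro ⟨h1, h2⟩
      exact ⟨by nlinarith, by linarith⟩
  have hvol_eq : volume (myDisk h c r ∩ {q : ℝ × ℝ | h ≤ q.1})
      = volume (myDisk h c r ∩ {q : ℝ × ℝ | q.1 ≤ h}) := by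
    rw [← hpre]
    exact (hσ.measure_preimage hRm.nullMeasurableSet).symm
  have hnull : volume ((myDisk h c r ∩ {q : ℝ × ℝ | h ≤ q.1})
      ∩ (myDisk h c r ∩ {q : ℝ × ℝ | q.1 ≤ h})) = 0 := by
    have hsub : (myDisk h c r ∩ {q : ℝ × ℝ | h ≤ q.1})
        ∩ (myDisk h c r ∩ {q : ℝ × ℝ | q.1 ≤ h}) ⊆ ({h} : Set ℝ) ×ˢ (Set.univ : Set ℝ) := by
      rintro q ⟨⟨-, h1⟩, -, h2⟩
      exact ⟨le_antisymm h2 h1, Set.mem_univ _⟩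
    refine measure_mono_null hsub ?_
    rw [Measure.volume_eq_prod, Measure.prod_prod, Real.volume_singleton, zero_mul]
  have hunion : (myDisk h c r ∩ {q : ℝ × ℝ | h ≤ q.1})
      ∪ (myDisk h c r ∩ {q : ℝ × ℝ | q.1 ≤ h}) = myDisk h c r := by
    ext q
    simp only [Set.mem_union, Set.mem_inter_iff, Set.mem_setOf_eq]
    constructor
    · rintro (⟨h1, -⟩ | ⟨h1, -⟩) <;> exact h1
    · intro h1
      rcases le_total h q.1 with h2 | h2
      · exact Or.inl ⟨h1, h2⟩
      · exact Or.inr ⟨h1, h2⟩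
  have htwo : (2 : ENNReal) * volume (myDisk h c r ∩ {q : ℝ × ℝ | h ≤ q.1})
      = ENNReal.ofReal (π * r ^ 2) := by
    calc (2 : ENNReal) * volume (myDisk h c r ∩ {q : ℝ × ℝ | h ≤ q.1})
        = volume (myDisk h c r ∩ {q : ℝ × ℝ | h ≤ q.1})
          + volume (myDisk h c r ∩ {q : ℝ × ℝ | q.1 ≤ h}) := by rw [two_mul, hvol_eq]
      _ = volume ((myDisk h c r ∩ {q : ℝ × ℝ | h ≤ q.1})
            ∪ (myDisk h c r ∩ {q : ℝ × ℝ | q.1 ≤ h}))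
          + volume ((myDisk h c r ∩ {q : ℝ × ℝ | h ≤ q.1})
            ∩ (myDisk h c r ∩ {q : ℝ × ℝ | q.1 ≤ h})) :=
          (measure_union_add_inter' hRm _).symm
      _ = ENNReal.ofReal (π * r ^ 2) := by rw [hunion, hnull, add_zero, hD]
  have h2 : (2 : ENNReal) * volume (myDisk h c r ∩ {q : ℝ × ℝ | h ≤ q.1})
      = 2 * ENNReal.ofReal (π / 2 * r ^ 2) := by
    rw [htwo, ← ENNReal.ofReal_ofNat 2, ← ENNReal.ofReal_mul (by norm_num)]
    congr 1; ring
  exact (ENNReal.mul_right_inj two_ne_zero (by norm_num)).mp h2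
lemma left_lower (h r : ℝ) (hr0 : 0 < r) (hhr : h < r) (hh0 : 0 ≤ h) :
    ENNReal.ofReal (h * r)
      ≤ ∫⁻ a in Set.Ico (0 : ℝ) h, ENNReal.ofReal (2 * Real.sqrt (r ^ 2 - (a - h) ^ 2)) := by
  have step1 : ∫⁻ a in Set.Ico (0 : ℝ) h, ENNReal.ofReal (2 * (r - h + a))
      ≤ ∫⁻ a in Set.Ico (0 : ℝ) h, ENNReal.ofReal (2 * Real.sqrt (r ^ 2 - (a - h) ^ 2)) := by
    apply setLIntegral_mono (by fun_prop)
    intro a ha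
    apply ENNReal.ofReal_le_ofReal
    have h1 : 0 ≤ r - h + a := by linarith [ha.1, ha.2]
    have h2 : (r - h + a) ^ 2 ≤ r ^ 2 - (a - h) ^ 2 := by nlinarith [ha.1, ha.2]
    have : r - h + a ≤ Real.sqrt (r ^ 2 - (a - h) ^ 2) := by
      calc r - h + a = Real.sqrt ((r - h + a) ^ 2) := (Real.sqrt_sq h1).symm
        _ ≤ _ := Real.sqrt_le_sqrt h2
    linarith
  have step2 : ∫⁻ a in Set.Ico (0 : ℝ) h, ENNReal.ofReal (2 * (r - h + a))
      = ENNReal.ofReal (2 * r * h - h ^ 2) := by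
    rw [← MeasureTheory.ofReal_integral_eq_lintegral_ofReal]
    · congr 1
      rw [MeasureTheory.integral_Ico_eq_integral_Ioo, ← MeasureTheory.integral_Ioc_eq_integral_Ioo,
        ← intervalIntegral.integral_of_le hh0]
      have : ∀ a : ℝ, 2 * (r - h + a) = 2 * (r - h) + 2 * a := fun a => by ring
      simp_rw [this]
      rw [intervalIntegral.integral_add intervalIntegrable_const
        (intervalIntegral.intervalIntegrable_id.const_mul 2),
        intervalIntegral.integral_const, intervalIntegral.integral_const_mul,
        integral_id]
      simp only [smul_eq_mul, sub_zero]
      ring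
    · exact ((by fun_prop : Continuous fun a : ℝ => 2 * (r - h + a)).integrableOn_Icc).mono_set
        Set.Ico_subset_Icc_self
    · exact (ae_restrict_iff' measurableSet_Ico).mpr
        (ae_of_all _ fun a ha => show (0:ℝ) ≤ 2 * (r - h + a) by rcases ha with ⟨h1, h2⟩; linarith)
  calc ENNReal.ofReal (h * r) ≤ ENNReal.ofReal (2 * r * h - h ^ 2) := by
        apply ENNReal.ofReal_le_ofReal; nlinarith
    _ = _ := step2.symm
    _ ≤ _ := step1

lemma left_upper (h r : ℝ) (hr0 : 0 < r) (hhr : h < r) (hh0 : 0 ≤ h) :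
    ∫⁻ a in Set.Ico (0 : ℝ) h, ENNReal.ofReal (2 * Real.sqrt (r ^ 2 - (a - h) ^ 2))
      ≤ ENNReal.ofReal (2 * h * r) := by
  have step1 : ∫⁻ a in Set.Ico (0 : ℝ) h, ENNReal.ofReal (2 * Real.sqrt (r ^ 2 - (a - h) ^ 2))
      ≤ ∫⁻ _ in Set.Ico (0 : ℝ) h, ENNReal.ofReal (2 * r) := by
    apply lintegral_mono
    intro a
    apply ENNReal.ofReal_le_ofReal
    have : Real.sqrt (r ^ 2 - (a - h) ^ 2) ≤ r := by
      calc Real.sqrt (r ^ 2 - (a - h) ^ 2) ≤ Real.sqrt (r ^ 2) :=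
            Real.sqrt_le_sqrt (by nlinarith [sq_nonneg (a - h)])
        _ = r := Real.sqrt_sq hr0.le
    linarith
  calc _ ≤ _ := step1
    _ = ENNReal.ofReal (2 * r) * volume (Set.Ico (0 : ℝ) h) := setLIntegral_const _ _
    _ = ENNReal.ofReal (2 * h * r) := by
        rw [Real.volume_Ico, sub_zero, ← ENNReal.ofReal_mul (by linarith)]
        ring_nf

lemma abs_le_of_sq_add_sq (A B r : ℝ) (hr : 0 ≤ r) (hAB : A ^ 2 + B ^ 2 ≤ r ^ 2) :
    |A| ≤ r ∧ |B| ≤ r := by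
  constructor
  · rw [← Real.sqrt_sq hr, ← Real.sqrt_sq_eq_abs]
    exact Real.sqrt_le_sqrt (by nlinarith [sq_nonneg B])
  · rw [← Real.sqrt_sq hr, ← Real.sqrt_sq_eq_abs]
    exact Real.sqrt_le_sqrt (by nlinarith [sq_nonneg A])

end Aux

/-- For `0 < r < 1/2` and `x = (h, x₂)` with `0 ≤ h < r` and
`r < x₂ < 1 − r`, one has `(π/2) r² + h r ≤ area(B(x;r) ∩ [0,1]²) ≤ (π/2) r² + 2 h r`. -/
theorem area_ball_inter_unitSquare_bounds
    (r : ℝ) (hr0 : 0 < r) (hr : r < 1 / 2) (x : EuclideanSpace ℝ (Fin 2))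
    (hh0 : 0 ≤ x 0) (hhr : x 0 < r) (hx2l : r < x 1) (hx2u : x 1 < 1 - r) :
    ENNReal.ofReal (π / 2 * r ^ 2 + x 0 * r) ≤ volume (closedBall x r ∩ unitSquare) ∧
      volume (closedBall x r ∩ unitSquare) ≤ ENNReal.ofReal (π / 2 * r ^ 2 + 2 * x 0 * r) := by
  have hF : MeasurePreserving (fun p : EuclideanSpace ℝ (Fin 2) => (p 0, p 1)) volume volume :=
    (volume_preserving_finTwoArrow ℝ).comp
      (EuclideanSpace.volume_preserving_symm_measurableEquiv_toLp (Fin 2))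
  have hball : ∀ p : EuclideanSpace ℝ (Fin 2),
      p ∈ closedBall x r ↔ (p 0 - x 0) ^ 2 + (p 1 - x 1) ^ 2 ≤ r ^ 2 := by
    intro p
    rw [mem_closedBall, EuclideanSpace.dist_eq, Fin.sum_univ_two]
    rw [show r = Real.sqrt (r ^ 2) by rw [Real.sqrt_sq hr0.le]]
    rw [Real.sqrt_le_sqrt_iff (by positivity), Real.sq_sqrt (by positivity)]
    simp [Real.dist_eq, sq_abs]
  have hLm : MeasurableSet (myDisk (x 0) (x 1) r ∩ {q : ℝ × ℝ | 0 ≤ q.1 ∧ q.1 < x 0}) := by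
    apply (myDisk_measurable _ _ _).inter
    exact (measurableSet_le measurable_const measurable_fst).inter
      (measurableSet_lt measurable_fst measurable_const)
  have hRm : MeasurableSet (myDisk (x 0) (x 1) r ∩ {q : ℝ × ℝ | x 0 ≤ q.1}) :=
    (myDisk_measurable _ _ _).inter (measurableSet_le measurable_const measurable_fst)
  -- the set equality
  have hset : closedBall x r ∩ unitSquare
      = (fun p : EuclideanSpace ℝ (Fin 2) => (p 0, p 1)) ⁻¹'
        ((myDisk (x 0) (x 1) r ∩ {q : ℝ × ℝ | 0 ≤ q.1 ∧ q.1 < x 0})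
          ∪ (myDisk (x 0) (x 1) r ∩ {q : ℝ × ℝ | x 0 ≤ q.1})) := by
    ext p
    simp only [Set.mem_inter_iff, Set.mem_preimage, Set.mem_union, unitSquare, myDisk,
      Set.mem_setOf_eq, Set.mem_Icc]
    constructor
    · rintro ⟨hb, ⟨h0, -⟩, -⟩
      rw [hball] at hb
      rcases lt_or_ge (p 0) (x 0) with hlt | hle
      · exact Or.inl ⟨hb, h0, hlt⟩
      · exact Or.inr ⟨hb, hle⟩
    · intro hp
      have hd : (p 0 - x 0) ^ 2 + (p 1 - x 1) ^ 2 ≤ r ^ 2 ∧ 0 ≤ p 0 := by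
        rcases hp with ⟨hd, h0, -⟩ | ⟨hd, h0⟩
        exacts [⟨hd, h0⟩, ⟨hd, le_trans hh0 h0⟩]
      obtain ⟨habs0, habs1⟩ := abs_le_of_sq_add_sq _ _ _ hr0.le hd.1
      rw [abs_le] at habs0 habs1
      refine ⟨(hball p).mpr hd.1, ⟨hd.2, ?_⟩, ?_, ?_⟩
      · linarith [habs0.2]
      · linarith [habs1.1]
      · linarith [habs1.2]
  have hDisk : closedBall x r
      = (fun p : EuclideanSpace ℝ (Fin 2) => (p 0, p 1)) ⁻¹' myDisk (x 0) (x 1) r := by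
    ext p
    simp only [Set.mem_preimage, myDisk, Set.mem_setOf_eq]
    exact hball p
  have hD : volume (myDisk (x 0) (x 1) r) = ENNReal.ofReal (π * r ^ 2) := by
    have hpre := hF.measure_preimage (myDisk_measurable (x 0) (x 1) r).nullMeasurableSet
    rw [← hDisk] at hpre
    rw [← hpre, EuclideanSpace.volume_closedBall]
    simp only [Fintype.card_fin]
    rw [show ((2 : ℕ) : ℝ) / 2 + 1 = 2 by norm_num, Real.Gamma_two]
    rw [show Real.sqrt π ^ 2 / 1 = π by rw [Real.sq_sqrt pi_pos.le, div_one]]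
    rw [← ENNReal.ofReal_pow hr0.le, ← ENNReal.ofReal_mul (by positivity)]
    ring_nf
  have hdisj : Disjoint (myDisk (x 0) (x 1) r ∩ {q : ℝ × ℝ | 0 ≤ q.1 ∧ q.1 < x 0})
      (myDisk (x 0) (x 1) r ∩ {q : ℝ × ℝ | x 0 ≤ q.1}) := by
    rw [Set.disjoint_left]
    rintro q ⟨-, -, h1⟩ ⟨-, h2⟩
    exact absurd h2 (not_le.mpr h1)
  have hmain : volume (closedBall x r ∩ unitSquare)
      = volume (myDisk (x 0) (x 1) r ∩ {q : ℝ × ℝ | 0 ≤ q.1 ∧ q.1 < x 0})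
        + volume (myDisk (x 0) (x 1) r ∩ {q : ℝ × ℝ | x 0 ≤ q.1}) := by
    rw [hset, hF.measure_preimage (hLm.union hRm).nullMeasurableSet, measure_union hdisj hRm]
  have hR : volume (myDisk (x 0) (x 1) r ∩ {q : ℝ × ℝ | x 0 ≤ q.1})
      = ENNReal.ofReal (π / 2 * r ^ 2) := volume_myDisk_right _ _ _ hr0 hhr hh0 hD
  have hLvol := volume_myDisk_left (x 0) (x 1) r hr0 hhr hh0
  constructor
  · calc ENNReal.ofReal (π / 2 * r ^ 2 + x 0 * r)
        ≤ ENNReal.ofReal (π / 2 * r ^ 2) + ENNReal.ofReal (x 0 * r) := ENNReal.ofReal_add_le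
      _ ≤ volume (myDisk (x 0) (x 1) r ∩ {q : ℝ × ℝ | x 0 ≤ q.1})
          + volume (myDisk (x 0) (x 1) r ∩ {q : ℝ × ℝ | 0 ≤ q.1 ∧ q.1 < x 0}) := by
          apply add_le_add
          · rw [hR]
          · rw [hLvol]; exact left_lower (x 0) r hr0 hhr hh0
      _ = _ := by rw [hmain, add_comm]
  · calc volume (closedBall x r ∩ unitSquare)
        = volume (myDisk (x 0) (x 1) r ∩ {q : ℝ × ℝ | 0 ≤ q.1 ∧ q.1 < x 0})
          + volume (myDisk (x 0) (x 1) r ∩ {q : ℝ × ℝ | x 0 ≤ q.1}) := hmain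
      _ ≤ ENNReal.ofReal (2 * x 0 * r) + ENNReal.ofReal (π / 2 * r ^ 2) := by
          apply add_le_add
          · rw [hLvol]; exact left_upper (x 0) r hr0 hhr hh0
          · rw [hR]
      _ = ENNReal.ofReal (π / 2 * r ^ 2 + 2 * x 0 * r) := by
          rw [← ENNReal.ofReal_add (by positivity) (by positivity), add_comm]
end

section
/- For every natural number ℓ there exists a natural number s = s(ℓ) such that the following holds. Let G be a simple graph, let C be an s-blob cycle in G, and let v be a vertex of G not on C having at least |V(C)|/2 − ℓ neighbours (in G) among the vertices of C. Then there exist s' ≥ s − 2 and an s'-blob cycle C' in G with vertex set V(C') = {v} ∪ V(C) whose blob is contained in the blob of C. -/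
universe u

/-- An `s`-blob cycle in a simple graph `G`: a cyclic sequence of `m ≥ 3`
distinct vertices, consecutive ones adjacent in `G`, whose first `s`
vertices are pairwise adjacent in `G` (the *blob*). -/
structure BlobCycle {V : Type u} (G : SimpleGraph V) (s : ℕ) where
  m : ℕ
  three_le_m : 3 ≤ m
  s_le_m : s ≤ m
  one_le_s : 1 ≤ s
  f : ZMod m → V
  inj : Function.Injective f
  adj_succ : ∀ i : ZMod m, G.Adj (f i) (f (i + 1))
  adj_blob : ∀ i j : ZMod m, i.val < s → j.val < s → i ≠ j → G.Adj (f i) (f j)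

/-- The vertex set of a blob cycle. -/
def BlobCycle.verts {V : Type u} {G : SimpleGraph V} {s : ℕ} (C : BlobCycle G s) : Set V :=
  Set.range C.f

/-- The blob of a blob cycle. -/
def BlobCycle.blob {V : Type u} {G : SimpleGraph V} {s : ℕ} (C : BlobCycle G s) : Set V :=
  C.f '' {i | i.val < s}

/-- `x` and `y` are consecutive vertices (an edge) of the blob cycle. -/
def BlobCycle.IsEdge {V : Type u} {G : SimpleGraph V} {s : ℕ} (C : BlobCycle G s)
    (x y : V) : Prop :=
  ∃ i : ZMod C.m, (C.f i = x ∧ C.f (i + 1) = y) ∨ (C.f i = y ∧ C.f (i + 1) = x)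

theorem nodup_len_le_one {l : List ℕ} (hl : l.Nodup) {p : ℕ}
    (h : ∀ k ∈ l, k = p) : l.length ≤ 1 := by
  classical
  have h1 : l.toFinset ⊆ {p} := by
    intro k hk
    simp only [List.mem_toFinset] at hk
    simp only [Finset.mem_singleton]
    exact h k hk
  have h2 := Finset.card_le_card h1
  rw [List.toFinset_card_of_nodup hl] at h2
  simpa using h2

theorem length_filter_ge_sub_one (l : List ℕ) (hl : l.Nodup) (P : ℕ → Bool) (p : ℕ)
    (h : ∀ k ∈ l, P k = false → k = p) :
    l.length ≤ (l.filter P).length + 1 := by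
  have key := List.length_eq_length_filter_add (l := l) P
  have h2 : (l.filter (fun k => !(P k))).length ≤ 1 := by
    refine nodup_len_le_one (p := p) (hl.filter _) ?_
    intro k hk
    rw [List.mem_filter] at hk
    exact h k hk.1 (by simpa using hk.2)
  omega

theorem nodup_len_le_two {l : List ℕ} (hl : l.Nodup) {p q : ℕ}
    (h : ∀ k ∈ l, k = p ∨ k = q) : l.length ≤ 2 := by
  classical
  have h1 : l.toFinset ⊆ {p, q} := by
    intro k hk
    simp only [List.mem_toFinset] at hk
    simp only [Finset.mem_insert, Finset.mem_singleton]
    exact h k hk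
  have h2 := Finset.card_le_card h1
  rw [List.toFinset_card_of_nodup hl] at h2
  have h3 : ({p, q} : Finset ℕ).card ≤ 2 := by
    refine le_trans (Finset.card_insert_le _ _) ?_
    simp
  omega

theorem length_filter_ge_sub_two (l : List ℕ) (hl : l.Nodup) (P : ℕ → Bool) (p q : ℕ)
    (h : ∀ k ∈ l, P k = false → k = p ∨ k = q) :
    l.length ≤ (l.filter P).length + 2 := by
  have key := List.length_eq_length_filter_add (l := l) P
  have h2 : (l.filter (fun k => !(P k))).length ≤ 2 := by
    refine nodup_len_le_two (p := p) (q := q) (hl.filter _) ?_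
    intro k hk
    rw [List.mem_filter] at hk
    exact h k hk.1 (by simpa using hk.2)
  omega

theorem head?_range' (a n : ℕ) (h : 0 < n) : (List.range' a n).head? = some a := by
  cases n with
  | zero => omega
  | succ k => rw [List.range'_succ]; rfl

theorem getLast?_range' (a n : ℕ) (h : 0 < n) :
    (List.range' a n).getLast? = some (a + n - 1) := by
  have hne : List.range' a n ≠ [] := by simp [List.range'_eq_nil_iff]; omega
  rw [List.getLast?_eq_getLast hne, List.getLast_eq_getElem]
  congr 1
  have hlt : (List.range' a n).length - 1 < (List.range' a n).length := by
    simp [List.length_range']; omega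
  rw [List.getElem_range']
  simp [List.length_range']
  omega

theorem head_eq_of_head? {α : Type u} {l : List α} {a : α} (h : l.head? = some a)
    (hne : l ≠ []) : l.head hne = a := by
  rw [List.head?_eq_head hne] at h
  exact Option.some.inj h

theorem getLast_eq_of_getLast? {α : Type u} {l : List α} {a : α} (h : l.getLast? = some a)
    (hne : l ≠ []) : l.getLast hne = a := by
  rw [List.getLast?_eq_getLast hne] at h
  exact Option.some.inj h

theorem chain'_map_range' {V : Type u} {G : SimpleGraph V} {m : ℕ} (g : ℕ → V)
    (gadj : ∀ k, k + 1 < m → G.Adj (g k) (g (k + 1))) :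
    ∀ (n a : ℕ), a + n ≤ m → ((List.range' a n).map g).Chain' G.Adj := by
  intro n
  induction n with
  | zero => intro a _; simp [List.Chain']
  | succ k ih =>
    intro a h
    rw [List.range'_succ, List.map_cons, List.Chain', List.isChain_cons]
    refine ⟨?_, ih (a + 1) (by omega)⟩
    intro y hy
    cases k with
    | zero => simp at hy
    | succ k' =>
      rw [List.range'_succ, List.map_cons, List.head?_cons] at hy
      simp only [Option.mem_def, Option.some.injEq] at hy
      rw [← hy]
      exact gadj a (by omega)

theorem pairwise_map_blob {V : Type u} {G : SimpleGraph V} {s : ℕ} (g : ℕ → V)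
    (gblob : ∀ a b, a < s → b < s → a ≠ b → G.Adj (g a) (g b))
    (I : List ℕ) (hnd : I.Nodup) (hlt : ∀ k ∈ I, k < s) :
    (I.map g).Pairwise G.Adj := by
  rw [List.pairwise_map]
  exact List.Pairwise.imp_of_mem
    (fun {a b} ha hb hab => gblob a b (hlt a ha) (hlt b hb) hab) hnd

theorem get_take_compat {α : Type u} (L : List α) {i j : ℕ} (h : i < L.length) (h2 : i < j) :
    L.get ⟨i, h⟩ = (L.take j).get ⟨i, by simp; omega⟩ := by simp

section Aux
variable {V : Type u} {G : SimpleGraph V}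

theorem blobCycle_ofList (s' : ℕ) (L : List V) (hne : L ≠ [])
    (h3 : 3 ≤ L.length) (hnd : L.Nodup)
    (hs1 : 1 ≤ s') (hsle : s' ≤ L.length)
    (hchain : List.Chain' G.Adj L)
    (hwrap : G.Adj (L.getLast hne) (L.head hne))
    (hblob : (L.take s').Pairwise G.Adj) :
    ∃ C' : BlobCycle G s', C'.verts = {x | x ∈ L} ∧ C'.blob = {x | x ∈ L.take s'} := by
  haveI : NeZero L.length := ⟨by omega⟩
  haveI : Fact (1 < L.length) := ⟨by omega⟩
  have hget : ∀ (a b : ℕ) (ha : a < L.length) (hb : b < L.length), a < s' → b < s' → a ≠ b →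
      G.Adj (L.get ⟨a, ha⟩) (L.get ⟨b, hb⟩) := by
    have hlen : (L.take s').length = s' := by simp [List.length_take]; omega
    intro a b ha hb has hbs hab
    have key : ∀ (a b : ℕ) (ha : a < L.length) (hb : b < L.length), a < s' → b < s' → a < b →
        G.Adj (L.get ⟨a, ha⟩) (L.get ⟨b, hb⟩) := by
      intro a b ha hb has hbs hab
      have := List.pairwise_iff_get.mp hblob ⟨a, by omega⟩ ⟨b, by omega⟩ (by exact hab)
      rwa [← get_take_compat L ha has, ← get_take_compat L hb hbs] at this
    rcases Nat.lt_or_ge a b with h | h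
    · exact key a b ha hb has hbs h
    · exact (key b a hb ha hbs has (by omega)).symm
  refine ⟨⟨L.length, h3, hsle, hs1, fun i => L.get ⟨i.val, ZMod.val_lt i⟩, ?_, ?_, ?_⟩, ?_, ?_⟩
  · intro i j h
    have := (hnd.get_inj_iff).mp h
    exact ZMod.val_injective L.length (congrArg Fin.val this)
  · intro i
    have hv : (i + 1).val = (i.val + 1) % L.length := by
      rw [ZMod.val_add, ZMod.val_one]
    by_cases h : i.val + 1 < L.length
    · have h2 : (i + 1).val = i.val + 1 := by rw [hv, Nat.mod_eq_of_lt h]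
      have := List.isChain_iff_getElem.mp hchain i.val (by omega)
      convert this using 2
      · exact congrArg L.get (Fin.ext rfl)
      · exact congrArg L.get (Fin.ext h2)
    · have h1 : i.val = L.length - 1 := by have := ZMod.val_lt i; omega
      have h2 : (i + 1).val = 0 := by rw [hv, h1]; simp [Nat.sub_add_cancel (by omega : 1 ≤ L.length)]
      have e1 : L.getLast hne = L.get ⟨i.val, ZMod.val_lt i⟩ := by
        rw [List.getLast_eq_getElem]; simp [h1]
      have e2 : L.head hne = L.get ⟨(i+1).val, ZMod.val_lt _⟩ := by
        rw [List.head_eq_getElem]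
        congr 1
        exact h2.symm
      show G.Adj (L.get ⟨i.val, ZMod.val_lt i⟩) (L.get ⟨(i+1).val, ZMod.val_lt _⟩)
      rw [← e1, ← e2]; exact hwrap
  · intro i j hi hj hij
    exact hget i.val j.val (ZMod.val_lt i) (ZMod.val_lt j) hi hj
      (fun h => hij (ZMod.val_injective L.length h))
  · ext x
    simp only [BlobCycle.verts, Set.mem_range, Set.mem_setOf_eq]
    constructor
    · rintro ⟨i, rfl⟩; exact L.get_mem _
    · intro hx
      obtain ⟨⟨k, hk⟩, e⟩ := List.mem_iff_get.mp hx
      refine ⟨(k : ZMod L.length), ?_⟩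
      have : ((k : ZMod L.length)).val = k := ZMod.val_cast_of_lt hk
      rw [← e]; congr 1; exact Fin.ext this
  · have hlen : (L.take s').length = s' := by simp [List.length_take]; omega
    ext x
    simp only [BlobCycle.blob, Set.mem_image, Set.mem_setOf_eq]
    constructor
    · rintro ⟨i, hi, rfl⟩
      rw [get_take_compat L (ZMod.val_lt i) hi]
      exact (List.take s' L).get_mem _
    · intro hx
      obtain ⟨⟨k, hk⟩, e⟩ := List.mem_iff_get.mp hx
      rw [hlen] at hk
      refine ⟨(k : ZMod L.length), ?_, ?_⟩
      · show ((k : ZMod L.length)).val < s'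
        rw [ZMod.val_cast_of_lt (by omega : k < L.length)]; exact hk
      · rw [← e]
        have hkL : k < L.length := by omega
        rw [← get_take_compat L hkL hk]
        congr 1
        exact Fin.ext (ZMod.val_cast_of_lt (by omega))

theorem insert_via {m s' : ℕ} (g : ℕ → V) (v : V)
    (hm3 : 3 ≤ m)
    (hvg : ∀ k, k < m → v ≠ g k)
    (hginj : ∀ a, a < m → ∀ b, b < m → g a = g b → a = b)
    (A B : List ℕ)
    (hlt : ∀ k ∈ A ++ B, k < m)
    (hnd : (A ++ B).Nodup)
    (hcover : ∀ k, k < m → k ∈ A ++ B)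
    (hAne : A ≠ [])
    (hchainA : ((A.map g)).Chain' G.Adj)
    (hchainB : ((B.map g)).Chain' G.Adj)
    (hlastA : G.Adj (g (A.getLast hAne)) v)
    (hheadBA : ∀ h : (B ++ A) ≠ [], G.Adj v (g ((B ++ A).head h)))
    (hwrapB : ∀ hB : B ≠ [], G.Adj (g (B.getLast hB)) (g (A.head hAne)))
    (hs1 : 1 ≤ s') (hs'A : s' ≤ A.length)
    (htake : ((A.take s').map g).Pairwise G.Adj)
    (htrue : True) :
    ∃ C' : BlobCycle G s', C'.verts = {v} ∪ {x | ∃ k, k < m ∧ g k = x} ∧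
      C'.blob = {x | ∃ k ∈ A.take s', g k = x} := by
  classical
  have hmlen : m ≤ (A ++ B).length := by
    have h1 : Finset.range m ⊆ (A ++ B).toFinset := by
      intro k hk; simp only [Finset.mem_range] at hk; simpa using hcover k hk
    have := Finset.card_le_card h1
    rwa [Finset.card_range, List.toFinset_card_of_nodup hnd] at this
  set L : List V := A.map g ++ v :: B.map g with hL
  have hLlen : L.length = A.length + B.length + 1 := by simp [hL]; omega
  have hLne : L ≠ [] := by
    intro h; apply_fun List.length at h; simp [hLlen] at h
  have h3 : 3 ≤ L.length := by
    have := List.length_append (as := A) (bs := B); omega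
  -- nodup
  have hmapnd : ((A ++ B).map g).Nodup := by
    refine List.Nodup.map_on ?_ hnd
    intro x hx y hy hxy
    exact hginj x (hlt x hx) y (hlt y hy) hxy
  have hvnotin : v ∉ (A ++ B).map g := by
    intro hmem
    obtain ⟨k, hk, he⟩ := List.mem_map.mp hmem
    exact hvg k (hlt k hk) he.symm
  have hndL : L.Nodup := by
    rw [hL, List.nodup_middle, List.nodup_cons, ← List.map_append]
    exact ⟨hvnotin, hmapnd⟩
  -- chain
  have hchainL : List.Chain' G.Adj L := by
    rw [hL, List.Chain', List.isChain_append]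
    refine ⟨hchainA, ?_, ?_⟩
    · rw [List.isChain_cons]
      refine ⟨?_, hchainB⟩
      intro y hy
      cases hB : B with
      | nil => subst hB; simp at hy
      | cons b bs =>
        have hBne : B ≠ [] := by rw [hB]; simp
        rw [List.head?_map, List.head?_eq_head hBne] at hy
        simp only [Option.map_some, Option.mem_def, Option.some.injEq] at hy
        have hBA : (B ++ A) ≠ [] := by simp [hAne]
        have hhead : (B ++ A).head hBA = B.head hBne := by
          rw [List.head_append]; simp [hB]
        have := hheadBA hBA
        rw [hhead] at this
        rwa [← hy]
    · intro x hx y hy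
      rw [List.getLast?_map, List.getLast?_eq_getLast hAne] at hx
      simp only [Option.map_some, Option.mem_def, Option.some.injEq] at hx
      simp only [List.head?_cons, Option.mem_def, Option.some.injEq] at hy
      rw [← hx, ← hy]
      exact hlastA
  -- wrap
  have hheadL : L.head hLne = g (A.head hAne) := by
    have h1 : L.head? = some (g (A.head hAne)) := by
      rw [hL, List.head?_append, List.head?_map, List.head?_eq_head hAne]
      simp
    rw [List.head?_eq_head hLne] at h1
    exact Option.some.inj h1
  have hwrapL : G.Adj (L.getLast hLne) (L.head hLne) := by
    rw [hheadL]
    cases hB : B with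
    | nil =>
      have hlast : L.getLast? = some v := by
        rw [hL, List.getLast?_append]
        simp [hB]
      rw [List.getLast?_eq_getLast hLne] at hlast
      rw [Option.some.inj hlast]
      have hBA : (B ++ A) ≠ [] := by simp [hAne]
      have := hheadBA hBA
      have hh : (B ++ A).head hBA = A.head hAne := by
        subst hB; simp
      rwa [hh] at this
    | cons b bs =>
      have hBne : B ≠ [] := by rw [hB]; simp
      have hlast : L.getLast? = some (g (B.getLast hBne)) := by
        rw [hL, List.getLast?_append]
        have : (v :: B.map g).getLast? = some (g (B.getLast hBne)) := by
          have h2 : (v :: B.map g).getLast? = (B.map g).getLast? := by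
            cases hB2 : B.map g with
            | nil => simp [List.map_eq_nil_iff] at hB2; exact absurd hB2 hBne
            | cons c cs => simp
          rw [h2, List.getLast?_map, List.getLast?_eq_getLast hBne]; simp
        rw [this]; simp
      rw [List.getLast?_eq_getLast hLne] at hlast
      rw [Option.some.inj hlast]
      exact hwrapB hBne
  -- take
  have htakeL : L.take s' = (A.take s').map g := by
    rw [hL, List.take_append_of_le_length (by simpa using hs'A), List.map_take]
  have hblobL : (L.take s').Pairwise G.Adj := by rw [htakeL]; exact htake
  obtain ⟨C', hv, hb⟩ := blobCycle_ofList s' L hLne h3 hndL hs1 (by omega) hchainL hwrapL hblobL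
  refine ⟨C', ?_, ?_⟩
  · rw [hv]; ext x
    simp only [Set.mem_setOf_eq, Set.mem_union, Set.mem_singleton_iff, hL,
      List.mem_append, List.mem_cons, List.mem_map]
    constructor
    · rintro (⟨k, hk, rfl⟩ | rfl | ⟨k, hk, rfl⟩)
      · exact Or.inr ⟨k, hlt k (by simp [hk]), rfl⟩
      · exact Or.inl rfl
      · exact Or.inr ⟨k, hlt k (by simp [hk]), rfl⟩
    · rintro (rfl | ⟨k, hk, rfl⟩)
      · exact Or.inr (Or.inl rfl)
      · rcases List.mem_append.mp (hcover k hk) with h | h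
        · exact Or.inl ⟨k, h, rfl⟩
        · exact Or.inr (Or.inr ⟨k, h, rfl⟩)
  · rw [hb, htakeL]; ext x
    simp [← List.map_take, List.mem_map]

end Aux

set_option maxHeartbeats 1000000 in
theorem blobCycle_insert_vertex_aux (ℓ s : ℕ) (hsdef : s = 2 * ℓ + 8)
    (V : Type u) (G : SimpleGraph V) (C : BlobCycle G s) (v : V)
    (hvC : v ∉ C.verts)
    (hcount : (C.m : ℝ) / 2 - ℓ ≤ ((G.neighborSet v ∩ C.verts).ncard : ℝ)) :
    ∃ (s' : ℕ) (C' : BlobCycle G s'), s - 2 ≤ s' ∧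
        C'.verts = {v} ∪ C.verts ∧ C'.blob ⊆ C.blob := by
  classical
  have hm3 : 3 ≤ C.m := C.three_le_m
  have hsm : s ≤ C.m := C.s_le_m
  haveI : NeZero C.m := ⟨by omega⟩
  set g : ℕ → V := fun k => C.f (k : ZMod C.m) with hg
  have gval : ∀ k, k < C.m → ((k : ZMod C.m)).val = k := fun k hk => ZMod.val_cast_of_lt hk
  have ginj : ∀ a, a < C.m → ∀ b, b < C.m → g a = g b → a = b := by
    intro a ha b hb h
    have h2 := C.inj h
    have h3 := congrArg ZMod.val h2
    rwa [gval a ha, gval b hb] at h3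
  have gadjmod : ∀ k, k < C.m → G.Adj (g k) (g ((k + 1) % C.m)) := by
    intro k hk
    have h1 := C.adj_succ (k : ZMod C.m)
    have h2 : ((((k + 1) % C.m : ℕ)) : ZMod C.m) = (k : ZMod C.m) + 1 := by
      rw [ZMod.natCast_mod]; push_cast; ring
    show G.Adj (C.f ↑k) (C.f ↑((k + 1) % C.m))
    rw [h2]; exact h1
  have gadj' : ∀ k, k + 1 < C.m → G.Adj (g k) (g (k + 1)) := by
    intro k hk
    have := gadjmod k (by omega)
    rwa [Nat.mod_eq_of_lt hk] at this
  have gwrap : G.Adj (g (C.m - 1)) (g 0) := by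
    have := gadjmod (C.m - 1) (by omega)
    rwa [Nat.sub_add_cancel (by omega), Nat.mod_self] at this
  have gblob : ∀ a b, a < s → b < s → a ≠ b → G.Adj (g a) (g b) := by
    intro a b ha hb hab
    refine C.adj_blob _ _ ?_ ?_ ?_
    · rw [gval a (by omega)]; exact ha
    · rw [gval b (by omega)]; exact hb
    · intro h
      have := congrArg ZMod.val h
      rw [gval a (by omega), gval b (by omega)] at this
      exact hab this
  have hverts : C.verts = {x | ∃ k, k < C.m ∧ g k = x} := by
    ext x
    simp only [BlobCycle.verts, Set.mem_range, Set.mem_setOf_eq]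
    constructor
    · rintro ⟨i, rfl⟩
      refine ⟨i.val, ZMod.val_lt i, ?_⟩
      show C.f ↑(i.val) = C.f i
      congr 1
      exact (ZMod.natCast_val i).trans (ZMod.cast_id _ _)
    · rintro ⟨k, hk, rfl⟩
      exact ⟨(k : ZMod C.m), rfl⟩
  have hblob : C.blob = {x | ∃ k, k < s ∧ g k = x} := by
    ext x
    simp only [BlobCycle.blob, Set.mem_image, Set.mem_setOf_eq]
    constructor
    · rintro ⟨i, hi, rfl⟩
      refine ⟨i.val, hi, ?_⟩
      show C.f ↑(i.val) = C.f i
      congr 1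
      exact (ZMod.natCast_val i).trans (ZMod.cast_id _ _)
    · rintro ⟨k, hk, rfl⟩
      refine ⟨(k : ZMod C.m), ?_, rfl⟩
      show ((k : ZMod C.m)).val < s
      rw [gval k (by omega)]; exact hk
  have hvg : ∀ k, k < C.m → v ≠ g k := by
    intro k hk h
    exact hvC ⟨(k : ZMod C.m), h.symm⟩
  -- Case I : v adjacent to two cyclically consecutive vertices g k, g (k+1), with k ≥ s-1.
  have caseI : ∀ k, s - 1 ≤ k → k < C.m → G.Adj v (g k) → G.Adj v (g ((k + 1) % C.m)) →
      ∃ (s' : ℕ) (C' : BlobCycle G s'), s - 2 ≤ s' ∧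
        C'.verts = {v} ∪ C.verts ∧ C'.blob ⊆ C.blob := by
    intro k hk1 hk2 ha1 ha2
    set A : List ℕ := List.range (k + 1) with hA
    set B : List ℕ := List.range' (k + 1) (C.m - (k + 1)) with hB
    have hABeq : A ++ B = List.range C.m := by
      rw [hA, hB, List.range_eq_range', List.range_eq_range']
      have h := List.range'_append (s := 0) (m := k + 1) (n := C.m - (k + 1)) (step := 1)
      simp only [one_mul, zero_add] at h
      rw [h]
      congr 1
      omega
    have hAne : A ≠ [] := by rw [hA]; simp
    have hlt : ∀ j ∈ A ++ B, j < C.m := by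
      intro j hj; rw [hABeq] at hj; exact List.mem_range.mp hj
    have hnd : (A ++ B).Nodup := by rw [hABeq]; exact List.nodup_range
    have hcover : ∀ j, j < C.m → j ∈ A ++ B := by
      intro j hj; rw [hABeq]; exact List.mem_range.mpr hj
    have chA : (A.map g).Chain' G.Adj := by
      rw [hA, List.range_eq_range']
      exact chain'_map_range' g gadj' (k + 1) 0 (by omega)
    have chB : (B.map g).Chain' G.Adj := by
      rw [hB]; exact chain'_map_range' g gadj' _ (k + 1) (by omega)
    have hAlast : A.getLast hAne = k := by
      refine getLast_eq_of_getLast? ?_ hAne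
      rw [hA, List.range_eq_range', getLast?_range' 0 (k + 1) (by omega)]
      congr 1
      omega
    have lastA : G.Adj (g (A.getLast hAne)) v := by rw [hAlast]; exact ha1.symm
    have headBA : ∀ h : (B ++ A) ≠ [], G.Adj v (g ((B ++ A).head h)) := by
      intro h
      rcases Nat.eq_zero_or_pos (C.m - (k + 1)) with h0 | h0
      · have hBnil : B = [] := by rw [hB, List.range'_eq_nil_iff]; exact h0
        have hh : (B ++ A).head h = 0 := by
          refine head_eq_of_head? ?_ h
          rw [hBnil, List.nil_append, hA, List.range_eq_range',
            head?_range' 0 (k + 1) (by omega)]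
        rw [hh]
        have hmod : (k + 1) % C.m = 0 := by
          have hkm : k + 1 = C.m := by omega
          rw [hkm, Nat.mod_self]
        rwa [hmod] at ha2
      · have hh : (B ++ A).head h = k + 1 := by
          refine head_eq_of_head? ?_ h
          rw [List.head?_append, hB, head?_range' (k + 1) _ h0]
          simp
        rw [hh]
        rwa [Nat.mod_eq_of_lt (by omega)] at ha2
    have wrapB : ∀ hBne : B ≠ [], G.Adj (g (B.getLast hBne)) (g (A.head hAne)) := by
      intro hBne
      have h0 : 0 < C.m - (k + 1) := by
        by_contra h'
        exact hBne (by rw [hB, List.range'_eq_nil_iff]; omega)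
      have h1 : B.getLast hBne = C.m - 1 := by
        refine getLast_eq_of_getLast? ?_ hBne
        rw [hB, getLast?_range' (k + 1) _ h0]
        congr 1
        omega
      have h2 : A.head hAne = 0 := by
        refine head_eq_of_head? ?_ hAne
        rw [hA, List.range_eq_range', head?_range' 0 (k + 1) (by omega)]
      rw [h1, h2]
      exact gwrap
    have htakeA : A.take s = List.range s := by
      rw [hA, List.take_range]
      congr 1
      omega
    have htake : ((A.take s).map g).Pairwise G.Adj := by
      rw [htakeA]
      exact pairwise_map_blob g gblob (List.range s) (List.nodup_range)
        (fun j hj => List.mem_range.mp hj)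
    obtain ⟨C', hCv, hCb⟩ := insert_via (m := C.m) (s' := s) g v hm3 hvg ginj A B
      hlt hnd hcover hAne chA chB lastA headBA wrapB (by omega)
      (by rw [hA, List.length_range]; omega) htake trivial
    refine ⟨s, C', by omega, ?_, ?_⟩
    · rw [hCv, hverts]
    · rw [hCb]
      rintro x ⟨j, hj, rfl⟩
      rw [htakeA] at hj
      rw [hblob]
      exact ⟨j, List.mem_range.mp hj, rfl⟩
  -- Case II : v adjacent to two blob vertices g p, g q, not both endpoints of the blob.
  have caseII : ∀ p q, p < q → q ≤ s - 1 → (1 ≤ p ∨ q ≤ s - 2) →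
      G.Adj v (g p) → G.Adj v (g q) →
      ∃ (s' : ℕ) (C' : BlobCycle G s'), s - 2 ≤ s' ∧
        C'.verts = {v} ∪ C.verts ∧ C'.blob ⊆ C.blob := by
    intro p q hpq hqle hne0 hap haq
    have hmw : s - 1 < C.m := by omega
    by_cases hqs : q ≤ s - 2
    · by_cases hp0 : p = 0
      · -- Branch (b): p = 0, 1 ≤ q ≤ s - 2.
        subst hp0
        have hq1 : 1 ≤ q := by omega
        set F : List ℕ := (List.range' 1 (s - 2)).filter (fun j => decide (j ≠ q)) with hF
        have hFmem : ∀ j, j ∈ F ↔ 1 ≤ j ∧ j ≤ s - 2 ∧ j ≠ q := by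
          intro j
          rw [hF, List.mem_filter, List.mem_range'_1]
          simp only [decide_eq_true_eq]
          omega
        have hFnd : F.Nodup := (List.nodup_range' 1).filter _
        have hqFnd : (q :: F).Nodup := by
          refine List.nodup_cons.mpr ⟨fun h => ?_, hFnd⟩
          have := (hFmem q).mp h
          omega
        have hqFlt : ∀ j ∈ q :: F, j ≤ s - 2 := by
          intro j hj
          rcases List.mem_cons.mp hj with rfl | hj
          · omega
          · have := (hFmem j).mp hj; omega
        have hFlen : s - 2 ≤ F.length + 1 := by
          have h1 := length_filter_ge_sub_one (List.range' 1 (s - 2)) (List.nodup_range' 1)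
            (fun j => decide (j ≠ q)) q ?_
          · rw [List.length_range'] at h1
            rw [← hF] at h1
            omega
          · intro j _ hjP
            have := of_decide_eq_false hjP
            omega
        set A : List ℕ := (q :: F) ++ (List.range' (s - 1) (C.m - (s - 1)) ++ [0]) with hA
        have hAne : A ≠ [] := by rw [hA]; simp
        have hAiff : ∀ j, j ∈ A ↔ (j = q ∨ j ∈ F ∨ (s - 1 ≤ j ∧ j < C.m) ∨ j = 0) := by
          intro j
          rw [hA]
          simp only [List.mem_append, List.mem_cons, List.mem_singleton, List.mem_range'_1,
            List.not_mem_nil, or_false]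
          constructor
          · rintro ((h | h) | h | h)
            · exact Or.inl h
            · exact Or.inr (Or.inl h)
            · exact Or.inr (Or.inr (Or.inl (by omega)))
            · exact Or.inr (Or.inr (Or.inr h))
          · rintro (h | h | h | h)
            · exact Or.inl (Or.inl h)
            · exact Or.inl (Or.inr h)
            · exact Or.inr (Or.inl (by omega))
            · exact Or.inr (Or.inr h)
        have hlt : ∀ j ∈ A ++ ([] : List ℕ), j < C.m := by
          intro j hj
          rw [List.append_nil, hAiff j] at hj
          rcases hj with h | h | h | h
          · omega
          · have := (hFmem j).mp h; omega
          · omega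
          · omega
        have hnd : (A ++ ([] : List ℕ)).Nodup := by
          rw [List.append_nil, hA]
          rw [List.nodup_append]
          refine ⟨hqFnd, ?_, ?_⟩
          · rw [List.nodup_append]
            refine ⟨List.nodup_range' 1, List.nodup_singleton _, ?_⟩
            intro a ha _ hb rfl
            rw [List.mem_range'_1] at ha
            simp only [List.mem_singleton] at hb
            omega
          · intro a ha _ hb rfl
            have h1 := hqFlt a ha
            rcases List.mem_append.mp hb with h | h
            · rw [List.mem_range'_1] at h; omega
            · simp only [List.mem_singleton] at h
              subst h
              rcases List.mem_cons.mp ha with h | h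
              · omega
              · have := (hFmem 0).mp h; omega
        have hcover : ∀ j, j < C.m → j ∈ A ++ ([] : List ℕ) := by
          intro j hj
          rw [List.append_nil, hAiff j, hFmem j]
          omega
        have chA : (A.map g).Chain' G.Adj := by
          rw [hA, List.map_append]
          rw [List.Chain', List.isChain_append]
          refine ⟨?_, ?_, ?_⟩
          · exact (pairwise_map_blob g gblob _ hqFnd (fun j hj => by have := hqFlt j hj; omega)).isChain
          · rw [List.map_append, List.isChain_append]
            refine ⟨chain'_map_range' g gadj' _ (s - 1) (by omega), by simp, ?_⟩
            intro x hx y hy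
            rw [List.getLast?_map, getLast?_range' _ _ (by omega)] at hx
            simp only [Option.map_some, Option.mem_def, Option.some.injEq] at hx
            simp only [List.map_singleton, List.head?_cons, Option.mem_def, Option.some.injEq] at hy
            rw [← hx, ← hy]
            have he : s - 1 + (C.m - (s - 1)) - 1 = C.m - 1 := by omega
            rw [he]
            exact gwrap
          · intro x hx y hy
            rw [List.getLast?_map, List.getLast?_eq_getLast (by simp : q :: F ≠ [])] at hx
            simp only [Option.map_some, Option.mem_def, Option.some.injEq] at hx
            have hw : (q :: F).getLast (by simp) ∈ q :: F := List.getLast_mem _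
            have hwle := hqFlt _ hw
            rw [List.map_append, List.head?_append, List.head?_map,
              head?_range' _ _ (by omega)] at hy
            simp only [Option.map_some, Option.some_or, Option.mem_def, Option.some.injEq] at hy
            rw [← hx, ← hy]
            exact gblob _ _ (by omega) (by omega) (by omega)
        have chB : ((([] : List ℕ)).map g).Chain' G.Adj := by simp [List.Chain']
        have lastA : G.Adj (g (A.getLast hAne)) v := by
          have h1 : A.getLast hAne = 0 := by
            refine getLast_eq_of_getLast? ?_ hAne
            rw [hA, List.getLast?_append, List.getLast?_append]
            simp
          rw [h1]
          exact hap.symm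
        have headBA : ∀ h : (([] : List ℕ) ++ A) ≠ [], G.Adj v (g ((([] : List ℕ) ++ A).head h)) := by
          intro h
          have h1 : (([] : List ℕ) ++ A).head h = q := by
            refine head_eq_of_head? ?_ h
            rw [List.nil_append, hA, List.head?_append, List.head?_cons]
            simp
          rw [h1]
          exact haq
        have wrapB : ∀ hBne : ([] : List ℕ) ≠ [], G.Adj (g (([] : List ℕ).getLast hBne)) (g (A.head hAne)) := by
          intro hBne
          exact absurd rfl hBne
        have htakeA : A.take (s - 2) = (q :: F).take (s - 2) := by
          rw [hA]
          exact List.take_append_of_le_length (by simp only [List.length_cons]; omega)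
        have htake : ((A.take (s - 2)).map g).Pairwise G.Adj := by
          rw [htakeA]
          refine pairwise_map_blob g gblob _
            (((q :: F).take_sublist _).nodup hqFnd) ?_
          intro j hj
          have := hqFlt j (List.take_subset _ _ hj)
          omega
        obtain ⟨C', hCv, hCb⟩ := insert_via (m := C.m) (s' := s - 2) g v hm3 hvg ginj A ([] : List ℕ)
          hlt hnd hcover hAne chA chB lastA headBA wrapB (by omega)
          (by rw [hA]; simp only [List.length_append, List.length_cons]; omega) htake trivial
        refine ⟨s - 2, C', by omega, ?_, ?_⟩
        · rw [hCv, hverts]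
        · rw [hCb]
          rintro x ⟨j, hj, rfl⟩
          rw [htakeA] at hj
          have hjs := hqFlt j (List.take_subset _ _ hj)
          rw [hblob]
          exact ⟨j, by omega, rfl⟩
      · -- Branch (a): 1 ≤ p < q ≤ s - 2.
        have hp1 : 1 ≤ p := by omega
        set F : List ℕ := (List.range' 1 (s - 2)).filter (fun j => decide (j ≠ p ∧ j ≠ q)) with hF
        have hFmem : ∀ j, j ∈ F ↔ 1 ≤ j ∧ j ≤ s - 2 ∧ j ≠ p ∧ j ≠ q := by
          intro j
          rw [hF, List.mem_filter, List.mem_range'_1]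
          simp only [decide_eq_true_eq]
          omega
        have hFnd : F.Nodup := (List.nodup_range' 1).filter _
        have hFlen : s - 4 ≤ F.length := by
          have h1 := length_filter_ge_sub_two (List.range' 1 (s - 2)) (List.nodup_range' 1)
            (fun j => decide (j ≠ p ∧ j ≠ q)) p q ?_
          · rw [List.length_range'] at h1
            rw [← hF] at h1
            omega
          · intro j _ hjP
            have := of_decide_eq_false hjP
            omega
        set A : List ℕ := 0 :: (F ++ [p]) with hA
        set B : List ℕ := q :: List.range' (s - 1) (C.m - (s - 1)) with hB
        have hAne : A ≠ [] := by rw [hA]; simp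
        have hAiff : ∀ j, j ∈ A ↔ (j = 0 ∨ j ∈ F ∨ j = p) := by
          intro j
          rw [hA]
          simp only [List.mem_cons, List.mem_append, List.mem_singleton]
          tauto
        have hAlt : ∀ j ∈ A, j ≤ s - 2 ∧ j ≠ q := by
          intro j hj
          rcases (hAiff j).mp hj with h | h | h
          · omega
          · have := (hFmem j).mp h; omega
          · omega
        have hAnd : A.Nodup := by
          rw [hA]
          refine List.nodup_cons.mpr ⟨fun h => ?_, ?_⟩
          · rcases List.mem_append.mp h with h | h
            · have := (hFmem 0).mp h; omega
            · simp only [List.mem_singleton] at h; omega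
          · rw [List.nodup_append]
            refine ⟨hFnd, List.nodup_singleton _, ?_⟩
            intro a ha _ hb rfl
            simp only [List.mem_singleton] at hb
            subst hb
            have := (hFmem a).mp ha
            omega
        have hBiff : ∀ j, j ∈ B ↔ (j = q ∨ (s - 1 ≤ j ∧ j < C.m)) := by
          intro j
          rw [hB]
          simp only [List.mem_cons, List.mem_range'_1]
          constructor
          · rintro (h | h)
            · exact Or.inl h
            · exact Or.inr (by omega)
          · rintro (h | h)
            · exact Or.inl h
            · exact Or.inr (by omega)
        have hlt : ∀ j ∈ A ++ B, j < C.m := by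
          intro j hj
          rcases List.mem_append.mp hj with h | h
          · have := hAlt j h; omega
          · rcases (hBiff j).mp h with h | h <;> omega
        have hnd : (A ++ B).Nodup := by
          rw [List.nodup_append]
          refine ⟨hAnd, ?_, ?_⟩
          · rw [hB]
            refine List.nodup_cons.mpr ⟨fun h => ?_, List.nodup_range' 1⟩
            rw [List.mem_range'_1] at h
            omega
          · intro a ha _ hb rfl
            have h1 := hAlt a ha
            rcases (hBiff a).mp hb with h | h <;> omega
        have hcover : ∀ j, j < C.m → j ∈ A ++ B := by
          intro j hj
          rw [List.mem_append, hAiff j, hBiff j, hFmem j]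
          omega
        have chA : (A.map g).Chain' G.Adj :=
          (pairwise_map_blob g gblob _ hAnd (fun j hj => by have := hAlt j hj; omega)).isChain
        have chB : (B.map g).Chain' G.Adj := by
          rw [hB, List.map_cons, List.Chain', List.isChain_cons]
          refine ⟨?_, chain'_map_range' g gadj' _ (s - 1) (by omega)⟩
          intro y hy
          rw [List.head?_map, head?_range' _ _ (by omega)] at hy
          simp only [Option.map_some, Option.mem_def, Option.some.injEq] at hy
          rw [← hy]
          exact gblob _ _ (by omega) (by omega) (by omega)
        have lastA : G.Adj (g (A.getLast hAne)) v := by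
          have h1 : A.getLast hAne = p := by
            refine getLast_eq_of_getLast? ?_ hAne
            rw [hA, show (0 :: (F ++ [p])) = (0 :: F) ++ [p] by simp, List.getLast?_concat]
          rw [h1]
          exact hap.symm
        have headBA : ∀ h : (B ++ A) ≠ [], G.Adj v (g ((B ++ A).head h)) := by
          intro h
          have h1 : (B ++ A).head h = q := by
            refine head_eq_of_head? ?_ h
            rw [hB, List.cons_append, List.head?_cons]
          rw [h1]
          exact haq
        have wrapB : ∀ hBne : B ≠ [], G.Adj (g (B.getLast hBne)) (g (A.head hAne)) := by
          intro hBne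
          have h1 : B.getLast hBne = C.m - 1 := by
            refine getLast_eq_of_getLast? ?_ hBne
            rw [hB, show (q :: List.range' (s - 1) (C.m - (s - 1)))
              = [q] ++ List.range' (s - 1) (C.m - (s - 1)) by simp,
              List.getLast?_append, getLast?_range' _ _ (by omega)]
            have he : s - 1 + (C.m - (s - 1)) - 1 = C.m - 1 := by omega
            rw [he]
            simp
          have h2 : A.head hAne = 0 := by
            refine head_eq_of_head? ?_ hAne
            rw [hA, List.head?_cons]
          rw [h1, h2]
          exact gwrap
        have htake : ((A.take (s - 2)).map g).Pairwise G.Adj := by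
          refine pairwise_map_blob g gblob _ ((A.take_sublist _).nodup hAnd) ?_
          intro j hj
          have := hAlt j (List.take_subset _ _ hj)
          omega
        obtain ⟨C', hCv, hCb⟩ := insert_via (m := C.m) (s' := s - 2) g v hm3 hvg ginj A B
          hlt hnd hcover hAne chA chB lastA headBA wrapB (by omega)
          (by rw [hA]; simp only [List.length_cons, List.length_append, List.length_singleton]; omega)
          htake trivial
        refine ⟨s - 2, C', by omega, ?_, ?_⟩
        · rw [hCv, hverts]
        · rw [hCb]
          rintro x ⟨j, hj, rfl⟩
          have hjs := hAlt j (List.take_subset _ _ hj)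
          rw [hblob]
          exact ⟨j, by omega, rfl⟩
    · -- Branch (c): 1 ≤ p ≤ s - 2, q = s - 1.
      have hp1 : 1 ≤ p := by omega
      have hqe : q = s - 1 := by omega
      subst hqe
      set F : List ℕ := (List.range' 1 (s - 2)).filter (fun j => decide (j ≠ p)) with hF
      have hFmem : ∀ j, j ∈ F ↔ 1 ≤ j ∧ j ≤ s - 2 ∧ j ≠ p := by
        intro j
        rw [hF, List.mem_filter, List.mem_range'_1]
        simp only [decide_eq_true_eq]
        omega
      have hFnd : F.Nodup := (List.nodup_range' 1).filter _
      have hFlen : s - 3 ≤ F.length := by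
        have h1 := length_filter_ge_sub_one (List.range' 1 (s - 2)) (List.nodup_range' 1)
          (fun j => decide (j ≠ p)) p ?_
        · rw [List.length_range'] at h1
          rw [← hF] at h1
          omega
        · intro j _ hjP
          have := of_decide_eq_false hjP
          omega
      set A : List ℕ := 0 :: (F ++ [p]) with hA
      set B : List ℕ := List.range' (s - 1) (C.m - (s - 1)) with hB
      have hAne : A ≠ [] := by rw [hA]; simp
      have hAiff : ∀ j, j ∈ A ↔ (j = 0 ∨ j ∈ F ∨ j = p) := by
        intro j
        rw [hA]
        simp only [List.mem_cons, List.mem_append, List.mem_singleton]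
        tauto
      have hAlt : ∀ j ∈ A, j ≤ s - 2 := by
        intro j hj
        rcases (hAiff j).mp hj with h | h | h
        · omega
        · have := (hFmem j).mp h; omega
        · omega
      have hAnd : A.Nodup := by
        rw [hA]
        refine List.nodup_cons.mpr ⟨fun h => ?_, ?_⟩
        · rcases List.mem_append.mp h with h | h
          · have := (hFmem 0).mp h; omega
          · simp only [List.mem_singleton] at h; omega
        · rw [List.nodup_append]
          refine ⟨hFnd, List.nodup_singleton _, ?_⟩
          intro a ha _ hb rfl
          simp only [List.mem_singleton] at hb
          subst hb
          have := (hFmem a).mp ha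
          omega
      have hlt : ∀ j ∈ A ++ B, j < C.m := by
        intro j hj
        rcases List.mem_append.mp hj with h | h
        · have := hAlt j h; omega
        · rw [hB, List.mem_range'_1] at h; omega
      have hnd : (A ++ B).Nodup := by
        rw [List.nodup_append]
        refine ⟨hAnd, by rw [hB]; exact List.nodup_range' 1, ?_⟩
        intro a ha _ hb rfl
        have h1 := hAlt a ha
        rw [hB, List.mem_range'_1] at hb
        omega
      have hcover : ∀ j, j < C.m → j ∈ A ++ B := by
        intro j hj
        rw [List.mem_append, hAiff j, hFmem j, hB, List.mem_range'_1]
        omega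
      have chA : (A.map g).Chain' G.Adj :=
        (pairwise_map_blob g gblob _ hAnd (fun j hj => by have := hAlt j hj; omega)).isChain
      have chB : (B.map g).Chain' G.Adj := by
        rw [hB]; exact chain'_map_range' g gadj' _ (s - 1) (by omega)
      have lastA : G.Adj (g (A.getLast hAne)) v := by
        have h1 : A.getLast hAne = p := by
          refine getLast_eq_of_getLast? ?_ hAne
          rw [hA, show (0 :: (F ++ [p])) = (0 :: F) ++ [p] by simp, List.getLast?_concat]
        rw [h1]
        exact hap.symm
      have headBA : ∀ h : (B ++ A) ≠ [], G.Adj v (g ((B ++ A).head h)) := by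
        intro h
        have h1 : (B ++ A).head h = s - 1 := by
          refine head_eq_of_head? ?_ h
          rw [List.head?_append, hB, head?_range' _ _ (by omega)]
          simp
        rw [h1]
        exact haq
      have wrapB : ∀ hBne : B ≠ [], G.Adj (g (B.getLast hBne)) (g (A.head hAne)) := by
        intro hBne
        have h1 : B.getLast hBne = C.m - 1 := by
          refine getLast_eq_of_getLast? ?_ hBne
          rw [hB, getLast?_range' _ _ (by omega)]
          congr 1
          omega
        have h2 : A.head hAne = 0 := by
          refine head_eq_of_head? ?_ hAne
          rw [hA, List.head?_cons]
        rw [h1, h2]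
        exact gwrap
      have htake : ((A.take (s - 2)).map g).Pairwise G.Adj := by
        refine pairwise_map_blob g gblob _ ((A.take_sublist _).nodup hAnd) ?_
        intro j hj
        have := hAlt j (List.take_subset _ _ hj)
        omega
      obtain ⟨C', hCv, hCb⟩ := insert_via (m := C.m) (s' := s - 2) g v hm3 hvg ginj A B
        hlt hnd hcover hAne chA chB lastA headBA wrapB (by omega)
        (by rw [hA]; simp only [List.length_cons, List.length_append, List.length_singleton]; omega)
        htake trivial
      refine ⟨s - 2, C', by omega, ?_, ?_⟩
      · rw [hCv, hverts]
      · rw [hCb]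
        rintro x ⟨j, hj, rfl⟩
        have hjs := hAlt j (List.take_subset _ _ hj)
        rw [hblob]
        exact ⟨j, by omega, rfl⟩

  by_cases H1 : ∃ k, k < C.m ∧ G.Adj v (g k) ∧ G.Adj v (g ((k + 1) % C.m))
  · obtain ⟨k, hk, h1, h2⟩ := H1
    rcases Nat.lt_or_ge k (s - 1) with hks | hks
    · have hq : (k + 1) % C.m = k + 1 := Nat.mod_eq_of_lt (by omega)
      rw [hq] at h2
      exact caseII k (k + 1) (by omega) (by omega) (by omega) h1 h2
    · exact caseI k hks hk h1 h2
  · by_cases H2 : ∃ p q, 1 ≤ p ∧ p < q ∧ q ≤ s - 2 ∧ G.Adj v (g p) ∧ G.Adj v (g q)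
    · obtain ⟨p, q, h1, h2, h3, h4, h5⟩ := H2
      exact caseII p q h2 (by omega) (Or.inl h1) h4 h5
    · exfalso
      set N : Finset ℕ := (Finset.range C.m).filter (fun k => G.Adj v (g k)) with hN
      have hNmem : ∀ k, k ∈ N ↔ k < C.m ∧ G.Adj v (g k) := by
        intro k; simp [hN]
      have hNcard : (G.neighborSet v ∩ C.verts).ncard = N.card := by
        have hset : G.neighborSet v ∩ C.verts = ↑(N.image g) := by
          ext x
          simp only [Set.mem_inter_iff, SimpleGraph.mem_neighborSet, hverts, Set.mem_setOf_eq,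
            Finset.coe_image, Set.mem_image, Finset.mem_coe]
          constructor
          · rintro ⟨hadj, k, hk, rfl⟩
            exact ⟨k, (hNmem k).mpr ⟨hk, hadj⟩, rfl⟩
          · rintro ⟨k, hk, rfl⟩
            obtain ⟨hk1, hk2⟩ := (hNmem k).mp hk
            exact ⟨hk2, k, hk1, rfl⟩
        rw [hset, Set.ncard_coe_finset, Finset.card_image_of_injOn]
        intro a ha b hb hab
        rw [Finset.mem_coe] at ha hb
        exact ginj a ((hNmem a).mp ha).1 b ((hNmem b).mp hb).1 hab
      rw [hNcard] at hcount
      set Nint := N.filter (fun k => 1 ≤ k ∧ k ≤ s - 2) with hNint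
      set Ntail := N.filter (fun k => s ≤ k) with hNtail
      have hsub : N ⊆ ({0, s - 1} : Finset ℕ) ∪ Nint ∪ Ntail := by
        intro k hk
        obtain ⟨hk1, hk2⟩ := (hNmem k).mp hk
        simp only [Finset.mem_union, Finset.mem_insert, Finset.mem_singleton, hNint, hNtail,
          Finset.mem_filter]
        by_cases h0 : k = 0
        · exact Or.inl (Or.inl (Or.inl h0))
        · by_cases hint : k ≤ s - 2
          · exact Or.inl (Or.inr ⟨hk, by omega⟩)
          · by_cases hs1 : k = s - 1
            · exact Or.inl (Or.inl (Or.inr hs1))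
            · exact Or.inr ⟨hk, by omega⟩
      have hNintcard : Nint.card ≤ 1 := by
        by_contra h
        obtain ⟨a, ha, b, hb, hab⟩ := (Finset.one_lt_card (s := Nint)).mp (by omega)
        rw [hNint, Finset.mem_filter] at ha hb
        obtain ⟨ha1, ha2⟩ := ha
        obtain ⟨hb1, hb2⟩ := hb
        obtain ⟨ha3, ha4⟩ := (hNmem a).mp ha1
        obtain ⟨hb3, hb4⟩ := (hNmem b).mp hb1
        rcases Nat.lt_or_ge a b with h' | h'
        · exact H2 ⟨a, b, ha2.1, h', hb2.2, ha4, hb4⟩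
        · exact H2 ⟨b, a, hb2.1, by omega, ha2.2, hb4, ha4⟩
      have hNtailcard : Ntail.card ≤ (C.m - 1 - s) / 2 + 1 := by
        have hinj := Finset.card_le_card_of_injOn (f := fun k => (k - s) / 2)
          (t := Finset.range ((C.m - 1 - s) / 2 + 1)) ?_ ?_ (s := Ntail)
        · simpa using hinj
        · intro a ha
          rw [hNtail, Finset.mem_coe, Finset.mem_filter] at ha
          obtain ⟨ha1, ha2⟩ := ha
          obtain ⟨ha3, _⟩ := (hNmem a).mp ha1
          simp only [Finset.mem_coe, Finset.mem_range]
          omega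
        · intro a ha b hb hab
          rw [Finset.mem_coe, hNtail, Finset.mem_filter] at ha hb
          obtain ⟨ha1, ha2⟩ := ha
          obtain ⟨hb1, hb2⟩ := hb
          obtain ⟨ha3, ha4⟩ := (hNmem a).mp ha1
          obtain ⟨hb3, hb4⟩ := (hNmem b).mp hb1
          by_contra hne
          simp only at hab
          rcases Nat.lt_or_ge a b with h' | h'
          · have hb' : b = a + 1 := by omega
            refine H1 ⟨a, ha3, ha4, ?_⟩
            rw [Nat.mod_eq_of_lt (by omega), ← hb']
            exact hb4
          · have ha' : a = b + 1 := by omega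
            refine H1 ⟨b, hb3, hb4, ?_⟩
            rw [Nat.mod_eq_of_lt (by omega), ← ha']
            exact ha4
      have hNcard2 : N.card ≤ 4 + (C.m - 1 - s) / 2 := by
        have h1 := Finset.card_le_card hsub
        have h2 := Finset.card_union_le (({0, s - 1} : Finset ℕ) ∪ Nint) Ntail
        have h3 := Finset.card_union_le ({0, s - 1} : Finset ℕ) Nint
        have h4 : ({0, s - 1} : Finset ℕ).card ≤ 2 :=
          le_trans (Finset.card_insert_le _ _) (by simp)
        omega
      rcases eq_or_lt_of_le hsm with heq | hlt'
      · -- C.m = s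
        have hTempty : Ntail = ∅ := by
          ext k
          simp only [hNtail, Finset.mem_filter, Finset.notMem_empty, iff_false, not_and,
            decide_eq_true_eq]
          intro hk
          obtain ⟨hk1, _⟩ := (hNmem k).mp hk
          omega
        have hN3 : N.card ≤ 3 := by
          have h1 := Finset.card_le_card hsub
          rw [hTempty] at h1
          have h2 := Finset.card_union_le (({0, s - 1} : Finset ℕ) ∪ Nint) (∅ : Finset ℕ)
          have h3 := Finset.card_union_le ({0, s - 1} : Finset ℕ) Nint
          have h4 : ({0, s - 1} : Finset ℕ).card ≤ 2 :=
            le_trans (Finset.card_insert_le _ _) (by simp)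
          simp only [Finset.card_empty] at h2
          omega
        have hc1 : ((N.card : ℕ) : ℝ) ≤ 3 := by exact_mod_cast hN3
        rw [← heq] at hcount
        have : ((s : ℕ) : ℝ) = 2 * ℓ + 8 := by rw [hsdef]; push_cast; ring
        linarith
      · -- s < C.m
        have hcast1 : (((C.m - 1 - s) / 2 : ℕ) : ℝ) ≤ ((C.m : ℝ) - 1 - s) / 2 := by
          have h1 : (((C.m - 1 - s) / 2 : ℕ) : ℝ) ≤ ((C.m - 1 - s : ℕ) : ℝ) / 2 :=
            Nat.cast_div_le
          have h2 : ((C.m - 1 - s : ℕ) : ℝ) = (C.m : ℝ) - 1 - s := by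
            have : C.m - 1 - s = C.m - (1 + s) := by omega
            rw [this, Nat.cast_sub (by omega)]
            push_cast; ring
          rw [h2] at h1
          exact h1
        have hc1 : ((N.card : ℕ) : ℝ) ≤ 4 + ((C.m : ℝ) - 1 - s) / 2 := by
          have := (Nat.cast_le (α := ℝ)).mpr hNcard2
          push_cast at this
          linarith
        have hsr : ((s : ℕ) : ℝ) = 2 * ℓ + 8 := by rw [hsdef]; push_cast; ring
        linarith

/-- For every `ℓ` there exists `s = s(ℓ)` such that: if `C` is an
`s`-blob cycle in a simple graph `G` and `v ∉ V(C)` has at least `|V(C)|/2 − ℓ`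
neighbours on `C`, then there is an `s'`-blob cycle `C'` with `s' ≥ s − 2`, vertex set
`{v} ∪ V(C)`, whose blob is contained in the blob of `C`. -/
theorem blobCycle_insert_vertex :
    ∀ ℓ : ℕ, ∃ s : ℕ, ∀ (V : Type u) (G : SimpleGraph V) (C : BlobCycle G s) (v : V),
      v ∉ C.verts →
      (C.m : ℝ) / 2 - ℓ ≤ ((G.neighborSet v ∩ C.verts).ncard : ℝ) →
      ∃ (s' : ℕ) (C' : BlobCycle G s'), s - 2 ≤ s' ∧
        C'.verts = {v} ∪ C.verts ∧ C'.blob ⊆ C.blob := by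
  intro ℓ
  exact ⟨2 * ℓ + 8, fun V G C v h1 h2 => blobCycle_insert_vertex_aux ℓ _ rfl V G C v h1 h2⟩
end

section
/- For every natural number ℓ there exists a natural number s = s(ℓ) such that the following holds. Let G be a simple graph, let C₁ be an s-blob cycle in G and C₂ a 5-blob cycle in G, with C₁ and C₂ vertex disjoint, and suppose every vertex of the blob of C₂ has at least ⌊|V(C₁)|/2⌋ − ℓ neighbours (in G) among the vertices of C₁. Then there exist s' ≥ s − 2 and an s'-blob cycle C in G with vertex set V(C) = V(C₁) ∪ V(C₂) whose blob is contained in the blob of C₁. -/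
universe u

namespace BlobAux

open List

variable {V : Type u} {G : SimpleGraph V} {s : ℕ}

lemma neZero_m (C : BlobCycle G s) : NeZero C.m := ⟨by have := C.three_le_m; omega⟩

/-- `C.f` at a natural index. -/
def cf (C : BlobCycle G s) (n : ℕ) : V := C.f (n : ZMod C.m)

lemma cf_mem_verts (C : BlobCycle G s) (n : ℕ) : cf C n ∈ C.verts := ⟨_, rfl⟩

lemma val_cast (C : BlobCycle G s) {n : ℕ} (h : n < C.m) : ((n : ZMod C.m)).val = n := by
  haveI := neZero_m C
  exact ZMod.val_cast_of_lt h

lemma cast_inj (C : BlobCycle G s) {a b : ℕ} (ha : a < C.m) (hb : b < C.m)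
    (h : (a : ZMod C.m) = (b : ZMod C.m)) : a = b := by
  have := congrArg ZMod.val h
  rwa [val_cast C ha, val_cast C hb] at this

lemma cf_inj (C : BlobCycle G s) {a b : ℕ} (ha : a < C.m) (hb : b < C.m)
    (h : cf C a = cf C b) : a = b :=
  cast_inj C ha hb (C.inj h)

lemma cf_adj_succ (C : BlobCycle G s) (n : ℕ) : G.Adj (cf C n) (cf C (n + 1)) := by
  have h : ((n + 1 : ℕ) : ZMod C.m) = (n : ZMod C.m) + 1 := by push_cast; ring
  rw [cf, cf, h]
  exact C.adj_succ _

lemma cf_adj_blob (C : BlobCycle G s) {a b : ℕ} (ha : a < s) (hb : b < s) (hne : a ≠ b) :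
    G.Adj (cf C a) (cf C b) := by
  haveI := neZero_m C
  have ham : a < C.m := lt_of_lt_of_le ha C.s_le_m
  have hbm : b < C.m := lt_of_lt_of_le hb C.s_le_m
  exact C.adj_blob _ _ (by rwa [val_cast C ham]) (by rwa [val_cast C hbm])
    (fun h => hne (cast_inj C ham hbm h))

lemma cf_m_eq (C : BlobCycle G s) : cf C C.m = cf C 0 := by
  simp [cf]

lemma cf_mem_blob (C : BlobCycle G s) {n : ℕ} (h : n < s) : cf C n ∈ C.blob :=
  ⟨_, by rw [Set.mem_setOf_eq, val_cast C (lt_of_lt_of_le h C.s_le_m)]; exact h, rfl⟩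

lemma cf_eq_f (C : BlobCycle G s) (i : ZMod C.m) : cf C i.val = C.f i := by
  haveI := neZero_m C
  rw [cf, ZMod.natCast_rightInverse i]

lemma verts_sub (C : BlobCycle G s) : ∀ x ∈ C.verts, ∃ n, n < C.m ∧ cf C n = x := by
  haveI := neZero_m C
  rintro x ⟨i, rfl⟩
  exact ⟨i.val, ZMod.val_lt i, cf_eq_f C i⟩

lemma ofList (s' : ℕ) (L : List V) (h3 : 3 ≤ L.length) (hs : s' ≤ L.length)
    (h1 : 1 ≤ s') (hnd : L.Nodup) (hch : L.IsChain G.Adj)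
    (hwrap : ∀ x ∈ L.getLast?, ∀ y ∈ L.head?, G.Adj x y)
    (hblob : ∀ x ∈ L.take s', ∀ y ∈ L.take s', x ≠ y → G.Adj x y) :
    ∃ C : BlobCycle G s', C.verts = {x | x ∈ L} ∧ C.blob ⊆ {x | x ∈ L.take s'} := by
  haveI : NeZero L.length := ⟨by omega⟩
  have hne : L ≠ [] := by intro h; rw [h] at h3; simp at h3
  have hmemtake : ∀ (k : ℕ) (hk : k < L.length), k < s' → L.get ⟨k, hk⟩ ∈ L.take s' := by
    intro k hk hks
    have h1 : (L.take s').length = s' := by simp [length_take]; omega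
    have : (L.take s').get ⟨k, by omega⟩ = L.get ⟨k, hk⟩ := by
      simp [List.get_eq_getElem, List.getElem_take]
    rw [← this]
    exact List.get_mem _ _
  have finj : ∀ i j : ZMod L.length,
      L.get ⟨i.val, ZMod.val_lt i⟩ = L.get ⟨j.val, ZMod.val_lt j⟩ → i = j := by
    intro i j h
    have h2 := List.nodup_iff_injective_get.mp hnd h
    have h3 : i.val = j.val := by simpa using congrArg Fin.val h2
    exact ZMod.val_injective _ h3
  refine ⟨⟨L.length, h3, hs, h1, fun i => L.get ⟨i.val, ZMod.val_lt i⟩,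
    fun i j h => finj i j h, ?_, ?_⟩, ?_, ?_⟩
  · -- adj_succ
    intro i
    have e1 : ((i.val + 1 : ℕ) : ZMod L.length) = i + 1 := by
      push_cast
      rw [ZMod.natCast_rightInverse i]
    have hv : (i + 1).val = (i.val + 1) % L.length := by
      rw [← e1, ZMod.val_natCast]
    have hiv : i.val < L.length := ZMod.val_lt i
    rcases Nat.lt_or_ge (i.val + 1) L.length with hlt | hge
    · have hv2 : (i + 1).val = i.val + 1 := by rw [hv, Nat.mod_eq_of_lt hlt]
      have := List.isChain_iff_getElem.mp hch i.val (by omega)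
      simp only [hv2]
      exact this
    · have hE : i.val = L.length - 1 := by omega
      have hv2 : (i + 1).val = 0 := by rw [hv]; have : i.val + 1 = L.length := by omega
                                       rw [this, Nat.mod_self]
      have hW := hwrap (L.getLast hne) (List.getLast?_eq_getLast hne)
        (L.head hne) (List.head?_eq_head hne)
      have hlast : L.getLast hne = L.get ⟨i.val, ZMod.val_lt i⟩ := by
        rw [List.getLast_eq_getElem]; simp only [hE, List.get_eq_getElem]
      have hhead : L.head hne = L.get ⟨(i + 1).val, ZMod.val_lt _⟩ := by
        simp only [hv2]
        rw [List.get_eq_getElem, ← List.head_eq_getElem_zero hne]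
      rw [hlast, hhead] at hW
      exact hW
  · -- adj_blob
    intro i j hi hj hij
    exact hblob _ (hmemtake i.val (ZMod.val_lt i) hi) _ (hmemtake j.val (ZMod.val_lt j) hj)
      (fun h => hij (finj i j h))
  · -- verts
    ext x
    simp only [BlobCycle.verts, Set.mem_range, Set.mem_setOf_eq]
    constructor
    · rintro ⟨i, rfl⟩; exact List.get_mem _ _
    · intro hx
      obtain ⟨k, hk, hkx⟩ := List.mem_iff_getElem.mp hx
      refine ⟨(k : ZMod L.length), ?_⟩
      have : ((k : ZMod L.length)).val = k := ZMod.val_cast_of_lt hk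
      simp only [List.get_eq_getElem, this]
      exact hkx
  · -- blob
    rintro x ⟨i, hi, rfl⟩
    exact hmemtake i.val (ZMod.val_lt i) hi


lemma chain'_range'_map_append {R : V → V → Prop} (g : ℕ → V)
    (h : ∀ n, R (g n) (g (n + 1))) :
    ∀ (k a : ℕ) (rest : List V), rest.IsChain R → (∀ y ∈ rest.head?, R (g (a + k)) y) →
      List.IsChain R ((List.range' a (k + 1)).map g ++ rest)
  | 0, a, rest, hrest, hj => by
    simp only [List.range'_succ, List.range'_zero, List.map_cons, List.map_nil, List.cons_append,
      List.nil_append]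
    exact List.isChain_cons.mpr ⟨by simpa using hj, hrest⟩
  | (k+1), a, rest, hrest, hj => by
    rw [List.range'_succ, List.map_cons, List.cons_append, List.isChain_cons]
    refine ⟨?_, chain'_range'_map_append g h k (a+1) rest hrest (by
      intro y hy
      have : a + 1 + k = a + (k+1) := by omega
      rw [this]; exact hj y hy)⟩
    intro y hy
    rw [List.range'_succ] at hy
    simp only [List.map_cons, List.cons_append, List.head?_cons, Option.mem_def,
      Option.some.injEq] at hy
    rw [← hy]
    exact h a

lemma chain'_range'_map {R : V → V → Prop} (g : ℕ → V)
    (h : ∀ n, R (g n) (g (n + 1))) (a k : ℕ) :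
    List.IsChain R ((List.range' a k).map g) := by
  cases k with
  | zero => simp
  | succ k =>
    have := chain'_range'_map_append g h k a [] (by simp) (by simp)
    simpa using this

/-- key rewriting trick : appending `g 0` to the mapped range ending at `m-1`
is the mapped range extended to `m`, when `g m = g 0`. -/
lemma range'_map_append_zero (g : ℕ → V) (a k : ℕ) (h : g (a + k) = g 0) :
    (List.range' a k).map g ++ [g 0] = (List.range' a (k + 1)).map g := by
  rw [List.range'_1_concat, List.map_append]
  simp [h]

/-- Hamilton path through `C₂` (a 5-blob cycle) from blob vertex `q` to blob vertex `p`,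
where `p, q, r` is a permutation of a 3-subset of {1,2,3}. -/
lemma c2path (C₂ : BlobCycle G 5) {p q r : ℕ}
    (hp : 0 < p ∧ p < 4) (hq : 0 < q ∧ q < 4) (hr : 0 < r ∧ r < 4)
    (hpq : p ≠ q) (hpr : p ≠ r) (hqr : q ≠ r) :
    ∃ P : List V, P.IsChain G.Adj ∧ P.head? = some (cf C₂ q) ∧ P.getLast? = some (cf C₂ p) ∧
      P.Nodup ∧ (∀ x ∈ P, x ∈ C₂.verts) ∧ (∀ x ∈ C₂.verts, x ∈ P) ∧ 3 ≤ P.length := by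
  have hm5 : 5 ≤ C₂.m := C₂.s_le_m
  set J : List ℕ := q :: r :: (List.range' 4 (C₂.m - 4) ++ [0, p]) with hJ
  have hJmem : ∀ n, n ∈ J ↔ (n = q ∨ n = r ∨ (4 ≤ n ∧ n < C₂.m) ∨ n = 0 ∨ n = p) := by
    intro n
    simp only [hJ, List.mem_cons, List.mem_append, List.mem_range'_1, List.mem_singleton,
      List.not_mem_nil, or_false]
    constructor
    · rintro (h | h | ⟨h1, h2⟩ | h | h) <;> omega
    · rintro (h | h | ⟨h1, h2⟩ | h | h) <;> omega
  have hJbound : ∀ n ∈ J, n < C₂.m := by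
    intro n hn; rw [hJmem] at hn; omega
  have hJnodup : J.Nodup := by
    rw [hJ]
    refine List.Nodup.cons ?_ (List.Nodup.cons ?_ ?_)
    · simp only [List.mem_cons, List.mem_append, List.mem_range'_1, List.mem_singleton,
        List.not_mem_nil, or_false]
      omega
    · simp only [List.mem_cons, List.mem_append, List.mem_range'_1, List.mem_singleton,
        List.not_mem_nil, or_false]
      omega
    · rw [List.nodup_append']
      refine ⟨List.nodup_range', ?_, ?_⟩
      · simp; omega
      · intro x hx hx'
        rw [List.mem_range'_1] at hx
        simp only [List.mem_cons, List.mem_singleton, List.not_mem_nil, or_false] at hx'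
        omega
  refine ⟨J.map (cf C₂), ?_, ?_, ?_, ?_, ?_, ?_, ?_⟩
  · -- chain
    have hkey : (List.range' 4 (C₂.m - 4)).map (cf C₂) ++ [cf C₂ 0] =
        (List.range' 4 (C₂.m - 4 + 1)).map (cf C₂) := by
      apply range'_map_append_zero
      rw [show 4 + (C₂.m - 4) = C₂.m by omega, cf_m_eq]
    have hshape : J.map (cf C₂) = cf C₂ q :: cf C₂ r ::
        ((List.range' 4 (C₂.m - 4 + 1)).map (cf C₂) ++ [cf C₂ p]) := by
      rw [hJ, ← hkey]
      simp [List.append_assoc]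
    rw [hshape]
    rw [List.isChain_cons]
    constructor
    · intro y hy; simp at hy; rw [← hy]; exact cf_adj_blob C₂ (by omega) (by omega) (by omega)
    rw [List.isChain_cons]
    constructor
    · intro y hy
      rw [show C₂.m - 4 + 1 = (C₂.m - 5) + 1 + 1 by omega, List.range'_succ] at hy
      simp only [List.map_cons, List.cons_append, List.head?_cons, Option.mem_def,
        Option.some.injEq] at hy
      rw [← hy]
      exact cf_adj_blob C₂ (by omega) (by omega) (by omega)
    · refine chain'_range'_map_append (cf C₂) (cf_adj_succ C₂) _ 4 [cf C₂ p] (by simp) ?_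
      intro y hy
      simp only [List.head?_cons, Option.mem_def, Option.some.injEq] at hy
      rw [← hy, show 4 + (C₂.m - 4) = C₂.m by omega, cf_m_eq]
      exact cf_adj_blob C₂ (by omega) (by omega) (by omega)
  · simp [hJ]
  · -- getLast?
    have : J.map (cf C₂) = (q :: r :: (List.range' 4 (C₂.m - 4) ++ [0])).map (cf C₂)
        ++ [cf C₂ p] := by
      rw [hJ]; simp [List.append_assoc]
    rw [this, List.getLast?_concat]
  · exact List.Nodup.map_on
      (fun x hx y hy h => cf_inj C₂ (hJbound x hx) (hJbound y hy) h) hJnodup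
  · intro x hx
    simp only [List.mem_map] at hx
    obtain ⟨n, _, rfl⟩ := hx
    exact cf_mem_verts C₂ n
  · intro x hx
    obtain ⟨n, hn, rfl⟩ := verts_sub C₂ x hx
    refine List.mem_map_of_mem ?_
    rw [hJmem]
    omega
  · simp [hJ]


lemma splice2 (C₁ : BlobCycle G s) (C₂ : BlobCycle G 5)
    (hdisj : Disjoint C₁.verts C₂.verts) {px py p q r : ℕ} (hs4 : 4 ≤ s)
    (hpx : 0 < px) (hpy2 : py < s - 1) (hxy : px < py)
    (hp : 0 < p ∧ p < 4) (hq : 0 < q ∧ q < 4) (hr : 0 < r ∧ r < 4)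
    (hpq : p ≠ q) (hpr : p ≠ r) (hqr : q ≠ r)
    (hadj1 : G.Adj (cf C₁ py) (cf C₂ q))
    (hadj2 : G.Adj (cf C₂ p) (cf C₁ px)) :
    ∃ (s' : ℕ) (C : BlobCycle G s'), s - 2 ≤ s' ∧
      C.verts = C₁.verts ∪ C₂.verts ∧ C.blob ⊆ C₁.blob := by
  obtain ⟨P, hPchain, hPhead, hPlast, hPnodup, hPsub, hPall, hPlen⟩ :=
    c2path C₂ hp hq hr hpq hpr hqr
  have hm := C₁.s_le_m
  have hm3 := C₁.three_le_m
  set m := C₁.m with hmdef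
  have hPne : P ≠ [] := by intro h; rw [h] at hPhead; simp at hPhead
  set segs : List ℕ := List.range' 1 (px - 1) ++ List.range' (px + 1) (py - px - 1) ++
    List.range' (py + 1) (s - 2 - py) with hsegs
  set Bidx : List ℕ := px :: segs ++ [s - 1] with hBidx
  set I1 : List ℕ := Bidx ++ (List.range' s (m - s) ++ [0, py]) with hI1
  set L : List V := I1.map (cf C₁) ++ P with hL
  have hBmem : ∀ n, n ∈ Bidx ↔ ((1 ≤ n ∧ n ≤ s - 2 ∧ n ≠ py) ∨ n = s - 1) := by
    intro n
    simp only [hBidx, hsegs, List.mem_cons, List.mem_append, List.mem_range'_1,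
      List.mem_singleton, List.not_mem_nil, or_false]
    omega
  have hI1mem : ∀ n, n ∈ I1 ↔ n < m := by
    intro n
    simp only [hI1, hBidx, hsegs, List.mem_cons, List.mem_append, List.mem_range'_1,
      List.mem_singleton, List.not_mem_nil, or_false]
    omega
  have hI1nodup : I1.Nodup := by
    simp only [hI1, hBidx, hsegs, List.nodup_append', List.nodup_cons, List.nodup_singleton,
      List.mem_cons, List.mem_append, List.mem_range'_1, List.mem_singleton,
      List.not_mem_nil, or_false, List.disjoint_left, and_true]
    repeat' apply And.intro
    all_goals first
      | exact List.nodup_range'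
      | exact List.nodup_nil
      | exact not_false
      | (intros; omega)
  have hBnodup : Bidx.Nodup := (List.nodup_append'.mp hI1nodup).1
  have hREST : List.IsChain G.Adj
      ((List.range' s (m - s)).map (cf C₁) ++ ([cf C₁ 0, cf C₁ py] ++ P)) := by
    have key1 : (List.range' s (m - s)).map (cf C₁) ++ [cf C₁ 0] =
        (List.range' s (m - s + 1)).map (cf C₁) := by
      apply range'_map_append_zero
      rw [show s + (m - s) = m by omega]; exact cf_m_eq C₁
    have hsh : (List.range' s (m - s)).map (cf C₁) ++ ([cf C₁ 0, cf C₁ py] ++ P) =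
        (List.range' s (m - s + 1)).map (cf C₁) ++ (cf C₁ py :: P) := by
      rw [← key1]; simp [List.append_assoc]
    rw [hsh]
    apply chain'_range'_map_append _ (cf_adj_succ C₁)
    · rw [List.isChain_cons]
      refine ⟨?_, hPchain⟩
      intro y hy
      rw [hPhead] at hy; simp only [Option.mem_def, Option.some.injEq] at hy
      rw [← hy]; exact hadj1
    · intro y hy
      simp only [List.head?_cons, Option.mem_def, Option.some.injEq] at hy
      rw [← hy, show s + (m - s) = m by omega, cf_m_eq]
      exact cf_adj_blob C₁ (by omega) (by omega) (by omega)
  have hchainL : List.IsChain G.Adj L := by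
    have hsh2 : L = Bidx.map (cf C₁) ++
        ((List.range' s (m - s)).map (cf C₁) ++ ([cf C₁ 0, cf C₁ py] ++ P)) := by
      simp [hL, hI1, List.map_append, List.append_assoc]
    have hAlast : (Bidx.map (cf C₁)).getLast? = some (cf C₁ (s - 1)) := by
      simp only [hBidx, List.map_cons, List.map_append, List.map_singleton, List.map_nil]
      show ((cf C₁ px :: List.map (cf C₁) segs) ++ [cf C₁ (s - 1)]).getLast? = _
      exact List.getLast?_concat
    rw [hsh2, List.isChain_append]
    refine ⟨?_, hREST, ?_⟩
    · rw [List.isChain_map]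
      apply List.Pairwise.isChain
      have hbd : ∀ n ∈ Bidx, n < s := by intro n hn; rw [hBmem] at hn; omega
      exact hBnodup.imp_of_mem (fun {a b} ha hb hne =>
        cf_adj_blob C₁ (hbd a ha) (hbd b hb) hne)
    · intro x hx y hy
      rw [hAlast] at hx
      simp only [Option.mem_def, Option.some.injEq] at hx
      subst hx
      rcases h0 : m - s with _ | k
      · rw [h0] at hy
        simp only [List.range'_zero, List.map_nil, List.nil_append, List.cons_append,
          List.head?_cons, Option.mem_def, Option.some.injEq] at hy
        subst hy
        exact cf_adj_blob C₁ (by omega) (by omega) (by omega)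
      · rw [h0, List.range'_succ] at hy
        simp only [List.map_cons, List.cons_append, List.head?_cons, Option.mem_def,
          Option.some.injEq] at hy
        subst hy
        have h := cf_adj_succ C₁ (s - 1)
        rwa [show s - 1 + 1 = s by omega] at h
  have hI1bound : ∀ n ∈ I1, n < m := fun n hn => (hI1mem n).mp hn
  have htake : L.take (s - 2) = Bidx.map (cf C₁) := by
    have hlen : (Bidx.map (cf C₁)).length = s - 2 := by
      simp [hBidx, hsegs]; omega
    have hsh2 : L = Bidx.map (cf C₁) ++
        ((List.range' s (m - s)).map (cf C₁) ++ ([cf C₁ 0, cf C₁ py] ++ P)) := by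
      simp [hL, hI1, List.map_append, List.append_assoc]
    rw [hsh2, List.take_left' hlen]
  have hBblob : ∀ x ∈ Bidx.map (cf C₁), ∃ n, n < s ∧ cf C₁ n = x := by
    intro x hx
    obtain ⟨n, hn, rfl⟩ := List.mem_map.mp hx
    exact ⟨n, by rw [hBmem] at hn; omega, rfl⟩
  have h3len : 3 ≤ L.length := by
    simp [hL, hI1, hBidx, hsegs]
    omega
  have hslen : s - 2 ≤ L.length := by
    simp [hL, hI1, hBidx, hsegs]
    omega
  have hLnodup : L.Nodup := by
    rw [hL, List.nodup_append']
    refine ⟨List.Nodup.map_on (fun x hx y hy h => cf_inj C₁ (hI1bound x hx) (hI1bound y hy) h)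
      hI1nodup, hPnodup, ?_⟩
    intro a ha ha'
    obtain ⟨n, _, rfl⟩ := List.mem_map.mp ha
    exact (Set.disjoint_left.mp hdisj (cf_mem_verts C₁ n)) (hPsub _ ha')
  have hLwrap : ∀ x ∈ L.getLast?, ∀ y ∈ L.head?, G.Adj x y := by
    intro x hx y hy
    rw [hL] at hx hy
    rw [List.getLast?_append, hPlast] at hx
    simp only [Option.some_or, Option.or_some, Option.mem_def, Option.some.injEq] at hx
    have hhd : (I1.map (cf C₁) ++ P).head? = some (cf C₁ px) := by
      rw [show I1 = px :: (segs ++ [s-1] ++ (List.range' s (m - s) ++ [0, py])) by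
        simp [hI1, hBidx, List.append_assoc], List.map_cons]
      simp
    rw [hhd] at hy
    simp only [Option.mem_def, Option.some.injEq] at hy
    rw [← hx, ← hy]
    exact hadj2
  have hLblob : ∀ x ∈ L.take (s - 2), ∀ y ∈ L.take (s - 2), x ≠ y → G.Adj x y := by
    intro x hx y hy hne
    rw [htake] at hx hy
    obtain ⟨n, hn, rfl⟩ := hBblob x hx
    obtain ⟨n', hn', rfl⟩ := hBblob y hy
    exact cf_adj_blob C₁ hn hn' (fun h => hne (by rw [h]))
  obtain ⟨C, hCverts, hCblob⟩ :=
    ofList (G := G) (s - 2) L h3len hslen (by omega) hLnodup hchainL hLwrap hLblob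
  refine ⟨s - 2, C, le_refl _, ?_, ?_⟩
  · rw [hCverts]
    ext x
    simp only [Set.mem_setOf_eq, hL, List.mem_append, List.mem_map, Set.mem_union]
    constructor
    · rintro (⟨n, _, rfl⟩ | h)
      · exact Or.inl (cf_mem_verts C₁ n)
      · exact Or.inr (hPsub x h)
    · rintro (h | h)
      · obtain ⟨n, hn, rfl⟩ := verts_sub C₁ x h
        exact Or.inl ⟨n, (hI1mem n).mpr hn, rfl⟩
      · exact Or.inr (hPall x h)
  · intro x hx
    have := hCblob hx
    rw [htake] at this
    obtain ⟨n, hn, rfl⟩ := hBblob x this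
    exact cf_mem_blob C₁ hn


lemma splice1 (C₁ : BlobCycle G s) (C₂ : BlobCycle G 5)
    (hdisj : Disjoint C₁.verts C₂.verts) {i p q r : ℕ} (hs3 : 3 ≤ s)
    (hi1 : s - 1 ≤ i) (hi2 : i < C₁.m)
    (hp : 0 < p ∧ p < 4) (hq : 0 < q ∧ q < 4) (hr : 0 < r ∧ r < 4)
    (hpq : p ≠ q) (hpr : p ≠ r) (hqr : q ≠ r)
    (hadj1 : G.Adj (cf C₁ i) (cf C₂ q))
    (hadj2 : G.Adj (cf C₂ p) (cf C₁ (i + 1))) :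
    ∃ (s' : ℕ) (C : BlobCycle G s'), s - 2 ≤ s' ∧
      C.verts = C₁.verts ∪ C₂.verts ∧ C.blob ⊆ C₁.blob := by
  obtain ⟨P, hPchain, hPhead, hPlast, hPnodup, hPsub, hPall, hPlen⟩ :=
    c2path C₂ hp hq hr hpq hpr hqr
  have hm := C₁.s_le_m
  have hm3 := C₁.three_le_m
  set m := C₁.m with hmdef
  have hPne : P ≠ [] := by intro h; rw [h] at hPhead; simp at hPhead
  set A : List V := (List.range' 0 (i + 1)).map (cf C₁) with hA
  set B : List V := (List.range' (i + 1) (m - (i + 1))).map (cf C₁) with hB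
  set L : List V := A ++ (P ++ B) with hL
  have hchainA : A.IsChain G.Adj := chain'_range'_map _ (cf_adj_succ C₁) _ _
  have hchainB : B.IsChain G.Adj := chain'_range'_map _ (cf_adj_succ C₁) _ _
  have hAlast : A.getLast? = some (cf C₁ i) := by
    rw [hA, List.range'_1_concat, List.map_append]
    simp
  have hAhead : A.head? = some (cf C₁ 0) := by
    rw [hA, List.range'_succ]
    simp
  have hchainL : L.IsChain G.Adj := by
    rw [hL, List.isChain_append]
    refine ⟨hchainA, ?_, ?_⟩
    · rw [List.isChain_append]
      refine ⟨hPchain, hchainB, ?_⟩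
      intro x hx y hy
      rw [hPlast] at hx
      simp only [Option.mem_def, Option.some.injEq] at hx
      subst hx
      rcases h0 : m - (i + 1) with _ | k
      · rw [hB, h0] at hy; simp at hy
      · rw [hB, h0, List.range'_succ] at hy
        simp only [List.map_cons, List.head?_cons, Option.mem_def, Option.some.injEq] at hy
        subst hy
        exact hadj2
    · intro x hx y hy
      rw [hAlast] at hx
      simp only [Option.mem_def, Option.some.injEq] at hx
      subst hx
      rw [List.head?_append, hPhead] at hy
      simp only [Option.some_or, Option.or_some, Option.mem_def, Option.some.injEq] at hy
      subst hy
      exact hadj1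
  have htake : L.take s = (List.range' 0 s).map (cf C₁) := by
    have hsplit : List.range' 0 (i + 1) = List.range' 0 s ++ List.range' s (i + 1 - s) := by
      have h := List.range'_append_1 (s := 0) (m := s) (n := i + 1 - s)
      rw [Nat.zero_add] at h
      rw [h]
      congr 1
      omega
    have hsh : L = (List.range' 0 s).map (cf C₁) ++
        ((List.range' s (i + 1 - s)).map (cf C₁) ++ (P ++ B)) := by
      rw [hL, hA, hsplit, List.map_append, List.append_assoc]
    rw [hsh, List.take_left' (by simp)]
  have hLwrap : ∀ x ∈ L.getLast?, ∀ y ∈ L.head?, G.Adj x y := by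
    intro x hx y hy
    rw [hL, List.head?_append, hAhead] at hy
    simp only [Option.some_or, Option.or_some, Option.mem_def, Option.some.injEq] at hy
    subst hy
    rw [hL, List.getLast?_append, List.getLast?_append] at hx
    rcases h0 : m - (i + 1) with _ | k
    · rw [hB, h0] at hx
      simp only [List.range'_zero, List.map_nil, List.getLast?_nil, Option.none_or,
        hPlast, Option.some_or, Option.or_some, Option.mem_def, Option.some.injEq] at hx
      subst hx
      have hieq : i + 1 = m := by omega
      rw [hieq, cf_m_eq] at hadj2
      exact hadj2
    · have hBlast : B.getLast? = some (cf C₁ (m - 1)) := by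
        rw [hB, h0, List.range'_1_concat, List.map_append]
        simp only [List.map_singleton, List.getLast?_concat, Option.some.injEq]
        congr 1
        omega
      rw [hBlast] at hx
      simp only [Option.some_or, Option.or_some, Option.mem_def, Option.some.injEq] at hx
      subst hx
      have h := cf_adj_succ C₁ (m - 1)
      rwa [show m - 1 + 1 = m by omega, cf_m_eq] at h
  have hLblob : ∀ x ∈ L.take s, ∀ y ∈ L.take s, x ≠ y → G.Adj x y := by
    intro x hx y hy hne
    rw [htake] at hx hy
    obtain ⟨n, hn, rfl⟩ := List.mem_map.mp hx
    obtain ⟨n', hn', rfl⟩ := List.mem_map.mp hy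
    rw [List.mem_range'_1] at hn hn'
    exact cf_adj_blob C₁ (by omega) (by omega) (fun h => hne (by rw [h]))
  have hLnodup : L.Nodup := by
    rw [hL, List.nodup_append', List.nodup_append']
    refine ⟨?_, ⟨hPnodup, ?_, ?_⟩, ?_⟩
    · refine List.Nodup.map_on ?_ (List.nodup_range')
      intro x hx y hy h
      rw [List.mem_range'_1] at hx hy
      exact cf_inj C₁ (by omega) (by omega) h
    · refine List.Nodup.map_on ?_ (List.nodup_range')
      intro x hx y hy h
      rw [List.mem_range'_1] at hx hy
      exact cf_inj C₁ (by omega) (by omega) h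
    · intro a ha ha'
      obtain ⟨n, _, rfl⟩ := List.mem_map.mp ha'
      exact (Set.disjoint_left.mp hdisj (cf_mem_verts C₁ n)) (hPsub _ ha)
    · intro a ha ha'
      obtain ⟨n, hn, rfl⟩ := List.mem_map.mp ha
      rcases List.mem_append.mp ha' with h | h
      · exact (Set.disjoint_left.mp hdisj (cf_mem_verts C₁ n)) (hPsub _ h)
      · obtain ⟨n', hn', h'⟩ := List.mem_map.mp h
        rw [List.mem_range'_1] at hn hn'
        have := cf_inj C₁ (by omega) (by omega) h'.symm
        omega
  have h3len : 3 ≤ L.length := by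
    simp [hL, hA, hB]
    omega
  have hslen : s ≤ L.length := by
    simp [hL, hA, hB]
    omega
  obtain ⟨C, hCverts, hCblob⟩ :=
    ofList (G := G) s L h3len hslen (by omega) hLnodup hchainL hLwrap hLblob
  refine ⟨s, C, by omega, ?_, ?_⟩
  · rw [hCverts]
    ext x
    simp only [Set.mem_setOf_eq, hL, hA, hB, List.mem_append, List.mem_map, Set.mem_union]
    constructor
    · rintro (⟨n, _, rfl⟩ | h | ⟨n, _, rfl⟩)
      · exact Or.inl (cf_mem_verts C₁ n)
      · exact Or.inr (hPsub x h)
      · exact Or.inl (cf_mem_verts C₁ n)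
    · rintro (h | h)
      · obtain ⟨n, hn, rfl⟩ := verts_sub C₁ x h
        rcases Nat.lt_or_ge n (i + 1) with h' | h'
        · exact Or.inl ⟨n, by rw [List.mem_range'_1]; omega, rfl⟩
        · exact Or.inr (Or.inr ⟨n, by rw [List.mem_range'_1]; omega, rfl⟩)
      · exact Or.inr (Or.inl (hPall x h))
  · intro x hx
    have := hCblob hx
    rw [htake] at this
    obtain ⟨n, hn, rfl⟩ := List.mem_map.mp this
    rw [List.mem_range'_1] at hn
    exact cf_mem_blob C₁ (by omega)


lemma card_filter_le_val {m t : ℕ} [NeZero m] (ht : t ≤ m) :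
    (Finset.univ.filter (fun j : ZMod m => t ≤ j.val)).card = m - t := by
  classical
  have h1 : (Finset.univ.filter (fun j : ZMod m => j.val < t)) =
      (Finset.range t).image (Nat.cast : ℕ → ZMod m) := by
    ext j
    simp only [Finset.mem_filter, Finset.mem_univ, true_and, Finset.mem_image,
      Finset.mem_range]
    constructor
    · intro h; exact ⟨j.val, h, ZMod.natCast_rightInverse j⟩
    · rintro ⟨k, hk, rfl⟩; rwa [ZMod.val_cast_of_lt (by omega)]
  have h2 : ((Finset.range t).image (Nat.cast : ℕ → ZMod m)).card = t := by
    rw [Finset.card_image_of_injOn, Finset.card_range]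
    intro a ha b hb hab
    rw [Finset.coe_range, Set.mem_Iio] at ha hb
    have := congrArg ZMod.val hab
    rwa [ZMod.val_cast_of_lt (by omega), ZMod.val_cast_of_lt (by omega)] at this
  have h3 := Finset.card_filter_add_card_filter_not
    (s := (Finset.univ : Finset (ZMod m))) (p := fun j : ZMod m => j.val < t)
  have h4 : (Finset.univ : Finset (ZMod m)).card = m := by
    rw [Finset.card_univ, ZMod.card]
  have h5 : (Finset.univ.filter (fun j : ZMod m => ¬ j.val < t)) =
      (Finset.univ.filter (fun j : ZMod m => t ≤ j.val)) := by
    apply Finset.filter_congr; intro j _; simp [Nat.not_lt]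
  rw [h1, h2, h5, h4] at h3
  omega

lemma counting {m sv ℓ : ℕ} [NeZero m] (hm : sv ≤ m) (hs : 2 * ℓ + 8 ≤ sv)
    (N1 N2 : Finset (ZMod m))
    (h1 : m / 2 - ℓ ≤ N1.card) (h2 : m / 2 - ℓ ≤ N2.card)
    (x₀ : ZMod m)
    (hb1 : ∀ j ∈ N1, 0 < j.val → j.val < sv - 1 → j = x₀)
    (hb2 : ∀ j ∈ N2, 0 < j.val → j.val < sv - 1 → j = x₀)
    (hno : ∀ j : ZMod m, sv - 1 ≤ j.val → ¬(j ∈ N1 ∧ j + 1 ∈ N2)) : False := by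
  classical
  have hm8 : 8 ≤ m := by omega
  set I := Finset.univ.filter (fun j : ZMod m => sv - 1 ≤ j.val) with hI
  set J := Finset.univ.filter (fun j : ZMod m => sv - 2 ≤ j.val) with hJ
  have hJcard : J.card = m - (sv - 2) := card_filter_le_val (by omega)
  have key : ∀ N : Finset (ZMod m), (∀ j ∈ N, 0 < j.val → j.val < sv - 1 → j = x₀) →
      N.card ≤ (N ∩ I).card + 2 := by
    intro N hN
    have hsub : N ⊆ (N ∩ I) ∪ {x₀, 0} := by
      intro j hj
      rcases Nat.lt_or_ge j.val (sv - 1) with h | h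
      · rcases Nat.eq_zero_or_pos j.val with h0 | h0
        · have hj0 : j = 0 := by
            have hc := ZMod.natCast_rightInverse (n := m) j
            rw [← hc, h0]; simp
          exact Finset.mem_union_right _ (by simp [hj0])
        · exact Finset.mem_union_right _ (by simp [hN j hj h0 h])
      · exact Finset.mem_union_left _ (Finset.mem_inter.mpr ⟨hj, by simp [hI]; omega⟩)
    calc N.card ≤ ((N ∩ I) ∪ {x₀, 0}).card := Finset.card_le_card hsub
      _ ≤ (N ∩ I).card + ({x₀, 0} : Finset (ZMod m)).card := Finset.card_union_le _ _
      _ ≤ (N ∩ I).card + 2 := by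
          have hc := Finset.card_insert_le x₀ ({0} : Finset (ZMod m))
          simp only [Finset.card_singleton] at hc
          omega
  have k1 := key N1 hb1
  have k2 := key N2 hb2
  set S := (N2 ∩ I).image (fun j => j - 1) with hS
  have hScard : S.card = (N2 ∩ I).card :=
    Finset.card_image_of_injective _ (fun a b h => by
      have := congrArg (· + 1) h
      simpa using this)
  have hdisjointIS : Disjoint (N1 ∩ I) S := by
    rw [Finset.disjoint_left]
    intro j hj hj'
    obtain ⟨k, hk, hk'⟩ := Finset.mem_image.mp hj'
    have hkj : k = j + 1 := by rw [← hk']; ring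
    rw [Finset.mem_inter] at hj hk
    have hjI : sv - 1 ≤ j.val := (Finset.mem_filter.mp hj.2).2
    exact hno j hjI ⟨hj.1, by rw [← hkj]; exact hk.1⟩
  have hsubJ1 : N1 ∩ I ⊆ J := by
    intro j hj
    rw [Finset.mem_inter] at hj
    have := (Finset.mem_filter.mp hj.2).2
    exact Finset.mem_filter.mpr ⟨Finset.mem_univ _, by omega⟩
  have hsubJ2 : S ⊆ J := by
    intro j hj
    obtain ⟨k, hk, rfl⟩ := Finset.mem_image.mp hj
    rw [Finset.mem_inter] at hk
    have hkI : sv - 1 ≤ k.val := (Finset.mem_filter.mp hk.2).2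
    have h1k : 1 ≤ k.val := by omega
    have hkval : (k - 1).val = k.val - 1 := by
      have hkc : k = ((k.val : ℕ) : ZMod m) := (ZMod.natCast_rightInverse k).symm
      have : k - 1 = ((k.val - 1 : ℕ) : ZMod m) := by
        rw [Nat.cast_sub h1k, Nat.cast_one, ← hkc]
      rw [this, ZMod.val_cast_of_lt (by have := ZMod.val_lt k; omega)]
    exact Finset.mem_filter.mpr ⟨Finset.mem_univ _, by rw [hkval]; omega⟩
  have hunion : (N1 ∩ I).card + S.card ≤ J.card := by
    rw [← Finset.card_union_of_disjoint hdisjointIS]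
    exact Finset.card_le_card (Finset.union_subset hsubJ1 hsubJ2)
  omega


end BlobAux

open BlobAux

/-- For every `ℓ` there exists `s = s(ℓ)` such that: if `C₁` is an
`s`-blob cycle and `C₂` a `5`-blob cycle in a simple graph `G`, vertex disjoint, and
every vertex of the blob of `C₂` has at least `⌊|V(C₁)|/2⌋ − ℓ` neighbours on `C₁`,
then there is an `s'`-blob cycle `C` with `s' ≥ s − 2`, vertex set `V(C₁) ∪ V(C₂)`,
whose blob is contained in the blob of `C₁`. -/
theorem blobCycle_merge_five_blob :
    ∀ ℓ : ℕ, ∃ s : ℕ, ∀ (V : Type u) (G : SimpleGraph V)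
      (C₁ : BlobCycle G s) (C₂ : BlobCycle G 5),
      Disjoint C₁.verts C₂.verts →
      (∀ x ∈ C₂.blob, C₁.m / 2 - ℓ ≤ (G.neighborSet x ∩ C₁.verts).ncard) →
      ∃ (s' : ℕ) (C : BlobCycle G s'), s - 2 ≤ s' ∧
        C.verts = C₁.verts ∪ C₂.verts ∧ C.blob ⊆ C₁.blob := by
  intro ℓ
  refine ⟨2 * ℓ + 8, ?_⟩
  intro V G C₁ C₂ hdisj hdeg
  classical
  haveI : NeZero C₁.m := neZero_m C₁
  have hm : 2 * ℓ + 8 ≤ C₁.m := C₁.s_le_m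
  set N : ℕ → Finset (ZMod C₁.m) :=
    fun k => Finset.univ.filter (fun i => G.Adj (C₂.f (k : ZMod C₂.m)) (C₁.f i)) with hN
  have hNcard : ∀ k, k < 5 → C₁.m / 2 - ℓ ≤ (N k).card := by
    intro k hk
    have hblob : C₂.f (k : ZMod C₂.m) ∈ C₂.blob := cf_mem_blob C₂ hk
    have hd := hdeg _ hblob
    have heq : (G.neighborSet (C₂.f (k : ZMod C₂.m)) ∩ C₁.verts) =
        C₁.f '' {i | G.Adj (C₂.f (k : ZMod C₂.m)) (C₁.f i)} := by
      ext y
      constructor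
      · rintro ⟨hy, i, rfl⟩; exact ⟨i, hy, rfl⟩
      · rintro ⟨i, hy, rfl⟩; exact ⟨hy, i, rfl⟩
    have hset : {i : ZMod C₁.m | G.Adj (C₂.f (k : ZMod C₂.m)) (C₁.f i)} = ↑(N k) := by
      ext i; simp [hN]
    rw [heq, Set.ncard_image_of_injective _ C₁.inj, hset, Set.ncard_coe_finset] at hd
    exact hd
  by_cases hS1 : ∃ (i : ZMod C₁.m) (p q : ℕ), (0 < p ∧ p < 4) ∧ (0 < q ∧ q < 4) ∧ p ≠ q ∧
      (2 * ℓ + 8) - 1 ≤ i.val ∧ G.Adj (C₂.f (q : ZMod C₂.m)) (C₁.f i) ∧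
      G.Adj (C₂.f (p : ZMod C₂.m)) (C₁.f (i + 1))
  · obtain ⟨i, p, q, hp, hq, hpq, hi, ha1, ha2⟩ := hS1
    refine splice1 C₁ C₂ hdisj (i := i.val) (p := p) (q := q) (r := 6 - p - q)
      (by omega) hi (ZMod.val_lt i) hp hq (by omega) hpq (by omega) (by omega) ?_ ?_
    · rw [cf_eq_f C₁ i]
      exact ha1.symm
    · have hc : ((i.val + 1 : ℕ) : ZMod C₁.m) = i + 1 := by
        push_cast
        rw [ZMod.natCast_rightInverse i]
      show G.Adj (C₂.f (p : ZMod C₂.m)) (C₁.f ((i.val + 1 : ℕ) : ZMod C₁.m))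
      rw [hc]
      exact ha2
  by_cases hS2 : ∃ (x y : ZMod C₁.m) (p q : ℕ), (0 < p ∧ p < 4) ∧ (0 < q ∧ q < 4) ∧ p ≠ q ∧
      0 < x.val ∧ x.val < (2 * ℓ + 8) - 1 ∧ 0 < y.val ∧ y.val < (2 * ℓ + 8) - 1 ∧ x ≠ y ∧
      G.Adj (C₂.f (p : ZMod C₂.m)) (C₁.f x) ∧ G.Adj (C₂.f (q : ZMod C₂.m)) (C₁.f y)
  · obtain ⟨x, y, p, q, hp, hq, hpq, hx0, hx1, hy0, hy1, hxy, hax, hay⟩ := hS2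
    have hvalne : x.val ≠ y.val := fun h => hxy (ZMod.val_injective _ h)
    rcases Nat.lt_or_ge x.val y.val with hlt | hge
    · refine splice2 C₁ C₂ hdisj (px := x.val) (py := y.val) (p := p) (q := q) (r := 6 - p - q)
        (by omega) (by omega) (by omega) hlt hp hq (by omega) hpq (by omega) (by omega) ?_ ?_
      · rw [cf_eq_f C₁ y]
        exact hay.symm
      · show G.Adj (C₂.f (p : ZMod C₂.m)) (cf C₁ x.val)
        rw [cf_eq_f C₁ x]
        exact hax
    · refine splice2 C₁ C₂ hdisj (px := y.val) (py := x.val) (p := q) (q := p) (r := 6 - p - q)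
        (by omega) (by omega) (by omega) (by omega) hq hp (by omega) (fun h => hpq h.symm)
        (by omega) (by omega) ?_ ?_
      · rw [cf_eq_f C₁ x]
        exact hax.symm
      · show G.Adj (C₂.f (q : ZMod C₂.m)) (cf C₁ y.val)
        rw [cf_eq_f C₁ y]
        exact hay
  -- neither: contradiction via counting
  exfalso
  set B' : Finset (ZMod C₁.m) :=
    Finset.univ.filter (fun j => 0 < j.val ∧ j.val < (2 * ℓ + 8) - 1) with hB'
  set S : ℕ → Finset (ZMod C₁.m) := fun k => N k ∩ B' with hS
  have hSmem : ∀ k j, j ∈ S k → (G.Adj (C₂.f (k : ZMod C₂.m)) (C₁.f j) ∧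
      0 < j.val ∧ j.val < (2 * ℓ + 8) - 1) := by
    intro k j hj
    rw [hS] at hj
    rw [Finset.mem_inter] at hj
    refine ⟨?_, ?_⟩
    · have := hj.1; rw [hN] at this; simpa using this
    · have := hj.2; rw [hB'] at this; simpa using this
  have key2 : ∀ p q : ℕ, (0 < p ∧ p < 4) → (0 < q ∧ q < 4) → p ≠ q →
      ∀ x ∈ S p, ∀ y ∈ S q, x = y := by
    intro p q hp hq hpq x hx y hy
    by_contra hne
    obtain ⟨hax, hx0, hx1⟩ := hSmem p x hx
    obtain ⟨hay, hy0, hy1⟩ := hSmem q y hy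
    exact hS2 ⟨x, y, p, q, hp, hq, hpq, hx0, hx1, hy0, hy1, hne, hax, hay⟩
  have hmain : ∃ (pa pb : ℕ) (x₀ : ZMod C₁.m), (0 < pa ∧ pa < 4) ∧ (0 < pb ∧ pb < 4) ∧
      pa ≠ pb ∧ (∀ j ∈ S pa, j = x₀) ∧ (∀ j ∈ S pb, j = x₀) := by
    have c12 : (0 < 1 ∧ 1 < 4) ∧ (0 < 2 ∧ 2 < 4) ∧ (1 : ℕ) ≠ 2 := by omega
    have c13 : (0 < 1 ∧ 1 < 4) ∧ (0 < 3 ∧ 3 < 4) ∧ (1 : ℕ) ≠ 3 := by omega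
    have c23 : (0 < 2 ∧ 2 < 4) ∧ (0 < 3 ∧ 3 < 4) ∧ (2 : ℕ) ≠ 3 := by omega
    by_cases h1 : (S 1).Nonempty
    · by_cases h2 : (S 2).Nonempty
      · obtain ⟨x, hx⟩ := h1
        obtain ⟨y, hy⟩ := h2
        refine ⟨1, 2, y, c12.1, c12.2.1, c12.2.2, ?_, ?_⟩
        · intro j hj; exact key2 1 2 c12.1 c12.2.1 c12.2.2 j hj y hy
        · intro j hj
          exact (key2 1 2 c12.1 c12.2.1 c12.2.2 x hx j hj).symm.trans
            (key2 1 2 c12.1 c12.2.1 c12.2.2 x hx y hy)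
      · by_cases h3 : (S 3).Nonempty
        · obtain ⟨x, hx⟩ := h1
          obtain ⟨z, hz⟩ := h3
          refine ⟨1, 3, z, c13.1, c13.2.1, c13.2.2, ?_, ?_⟩
          · intro j hj; exact key2 1 3 c13.1 c13.2.1 c13.2.2 j hj z hz
          · intro j hj
            exact (key2 1 3 c13.1 c13.2.1 c13.2.2 x hx j hj).symm.trans
              (key2 1 3 c13.1 c13.2.1 c13.2.2 x hx z hz)
        · exact ⟨2, 3, 0, c23.1, c23.2.1, c23.2.2,
            fun j hj => absurd ⟨j, hj⟩ h2, fun j hj => absurd ⟨j, hj⟩ h3⟩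
    · by_cases h2 : (S 2).Nonempty
      · by_cases h3 : (S 3).Nonempty
        · obtain ⟨y, hy⟩ := h2
          obtain ⟨z, hz⟩ := h3
          refine ⟨2, 3, z, c23.1, c23.2.1, c23.2.2, ?_, ?_⟩
          · intro j hj; exact key2 2 3 c23.1 c23.2.1 c23.2.2 j hj z hz
          · intro j hj
            exact (key2 2 3 c23.1 c23.2.1 c23.2.2 y hy j hj).symm.trans
              (key2 2 3 c23.1 c23.2.1 c23.2.2 y hy z hz)
        · exact ⟨1, 3, 0, c13.1, c13.2.1, c13.2.2,
            fun j hj => absurd ⟨j, hj⟩ h1, fun j hj => absurd ⟨j, hj⟩ h3⟩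
      · exact ⟨1, 2, 0, c12.1, c12.2.1, c12.2.2,
          fun j hj => absurd ⟨j, hj⟩ h1, fun j hj => absurd ⟨j, hj⟩ h2⟩
  obtain ⟨pa, pb, x₀, hpa, hpb, hpapb, hSa, hSb⟩ := hmain
  refine counting (m := C₁.m) (sv := 2 * ℓ + 8) hm (le_refl _) (N pa) (N pb)
    (hNcard pa (by omega)) (hNcard pb (by omega)) x₀ ?_ ?_ ?_
  · intro j hj h0 h1
    refine hSa j ?_
    rw [hS, Finset.mem_inter]
    exact ⟨hj, by rw [hB']; simp only [Finset.mem_filter, Finset.mem_univ, true_and]; omega⟩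
  · intro j hj h0 h1
    refine hSb j ?_
    rw [hS, Finset.mem_inter]
    exact ⟨hj, by rw [hB']; simp only [Finset.mem_filter, Finset.mem_univ, true_and]; omega⟩
  · intro j hj ⟨hj1, hj2⟩
    refine hS1 ⟨j, pb, pa, hpb, hpa, fun h => hpapb h.symm, hj, ?_, ?_⟩
    · have := hj1; rw [hN] at this; simpa using this
    · have := hj2; rw [hN] at this; simpa using this
end
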